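/- arXiv:1608.05435 — 6 statements merged into one kernel-verified Lean document; each statement's English description precedes it below -/
import Mathlib

section
/- The probability that two uniformly random integers from {1,...,n} are coprime tends to 6/π² as n → ∞, i.e., (1/n²)·#{(i,k) ∈ {1,...,n}² : gcd(i,k) = 1} → 6/π². -/
open Filter Finset ArithmeticFunction Real

open scoped ArithmeticFunction ArithmeticFunction.Moebius

lemma moebius_sum_divisors' (m : ℕ) :
    ∑ d ∈ m.divisors, ((μ d : ℤ) : ℝ) = if m = 1 then 1 else 0 := by
  have h := congrArg (fun f : ArithmeticFunction ℤ => f m)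
    ArithmeticFunction.moebius_mul_coe_zeta
  simp only [ArithmeticFunction.coe_mul_zeta_apply, ArithmeticFunction.one_apply] at h
  have h2 := congrArg (fun z : ℤ => (z : ℝ)) h
  push_cast at h2 ⊢
  simpa using h2

lemma card_coprime_eq (n : ℕ) :
    ((((Finset.Icc 1 n ×ˢ Finset.Icc 1 n).filter
        (fun p : ℕ × ℕ => Nat.gcd p.1 p.2 = 1)).card : ℝ)) =
    ∑ d ∈ Finset.Icc 1 n, (μ d : ℝ) * ((n / d : ℕ) : ℝ) ^ 2 := by
  have key : ∀ p : ℕ × ℕ, p ∈ Finset.Icc 1 n ×ˢ Finset.Icc 1 n →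
      (Nat.gcd p.1 p.2).divisors
        = (Finset.Icc 1 n).filter (fun d => d ∣ p.1 ∧ d ∣ p.2) := by
    rintro ⟨a, b⟩ hp
    simp only [Finset.mem_product, Finset.mem_Icc] at hp
    ext d
    simp only [Nat.mem_divisors, Nat.dvd_gcd_iff, Finset.mem_filter, Finset.mem_Icc]
    constructor
    · rintro ⟨⟨h1, h2⟩, -⟩
      have hd : 0 < d := Nat.pos_of_dvd_of_pos h1 (by omega)
      exact ⟨⟨hd, le_trans (Nat.le_of_dvd (by omega) h1) hp.1.2⟩, h1, h2⟩
    · rintro ⟨-, h1, h2⟩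
      refine ⟨⟨h1, h2⟩, ?_⟩
      have : 0 < Nat.gcd a b := Nat.gcd_pos_of_pos_left b (by omega)
      omega
  calc ((((Finset.Icc 1 n ×ˢ Finset.Icc 1 n).filter
        (fun p : ℕ × ℕ => Nat.gcd p.1 p.2 = 1)).card : ℝ))
      = ∑ p ∈ Finset.Icc 1 n ×ˢ Finset.Icc 1 n,
          (if Nat.gcd p.1 p.2 = 1 then (1 : ℝ) else 0) := by
        rw [Finset.natCast_card_filter]
    _ = ∑ p ∈ Finset.Icc 1 n ×ˢ Finset.Icc 1 n,
          ∑ d ∈ Finset.Icc 1 n, (if d ∣ p.1 ∧ d ∣ p.2 then (μ d : ℝ) else 0) := by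
        refine Finset.sum_congr rfl fun p hp => ?_
        rw [← Finset.sum_filter, ← key p hp]
        have := moebius_sum_divisors' (Nat.gcd p.1 p.2)
        push_cast at this
        rw [this]
    _ = ∑ d ∈ Finset.Icc 1 n, ∑ p ∈ Finset.Icc 1 n ×ˢ Finset.Icc 1 n,
          (if d ∣ p.1 ∧ d ∣ p.2 then (μ d : ℝ) else 0) := Finset.sum_comm
    _ = ∑ d ∈ Finset.Icc 1 n, (μ d : ℝ) * ((n / d : ℕ) : ℝ) ^ 2 := by
        refine Finset.sum_congr rfl fun d _ => ?_
        rw [← Finset.sum_filter, Finset.sum_const,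
          Finset.filter_product (fun x => d ∣ x) (fun x => d ∣ x)]
        have hc : ((Finset.Icc 1 n).filter (fun x => d ∣ x)).card = n / d := by
          rw [show Finset.Icc 1 n = Finset.Ioc 0 n from rfl]
          exact Nat.Ioc_filter_dvd_card_eq_div n d
        rw [Finset.card_product, hc]
        push_cast
        ring


lemma summable_moebius_div_sq : Summable (fun d : ℕ => (μ d : ℝ) / (d : ℝ) ^ 2) := by
  refine Summable.of_norm_bounded ((Real.summable_one_div_nat_pow).mpr one_lt_two) fun d => ?_
  rcases eq_or_ne d 0 with rfl | hd
  · simp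
  · rw [norm_div]
    have h1 : ‖(μ d : ℝ)‖ ≤ 1 := by
      rw [Real.norm_eq_abs, ← Int.cast_abs]
      exact_mod_cast ArithmeticFunction.abs_moebius_le_one (n := d)
    have h2 : ‖((d : ℝ) ^ 2)‖ = (d : ℝ) ^ 2 := by
      rw [Real.norm_eq_abs, _root_.abs_of_nonneg (by positivity)]
    rw [h2]
    exact div_le_div_of_nonneg_right h1 (by positivity)

lemma tsum_moebius_div_sq : ∑' d : ℕ, (μ d : ℝ) / (d : ℝ) ^ 2 = 6 / Real.pi ^ 2 := by
  have hs : (1 : ℝ) < (2 : ℂ).re := by norm_num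
  have h1 : LSeries (fun n => (μ n : ℂ)) 2 = (riemannZeta 2)⁻¹ := by
    have h2 := LSeries_zeta_mul_Lseries_moebius hs
    rw [LSeries_zeta_eq_riemannZeta hs] at h2
    have hz : riemannZeta 2 ≠ 0 := riemannZeta_ne_zero_of_one_lt_re (by norm_num)
    field_simp at h2 ⊢
    linear_combination h2
  have hterm : ∀ n : ℕ, LSeries.term (fun n => (μ n : ℂ)) 2 n = ((μ n : ℝ) / (n : ℝ) ^ 2 : ℝ) := by
    intro n
    rcases eq_or_ne n 0 with rfl | hn
    · simp [LSeries.term]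
    · rw [LSeries.term_of_ne_zero hn]
      rw [show ((2 : ℂ)) = ((2 : ℕ) : ℂ) by norm_num, Complex.cpow_natCast]
      push_cast
      rfl
  have hofr : ((∑' d : ℕ, (μ d : ℝ) / (d : ℝ) ^ 2 : ℝ) : ℂ)
      = LSeries (fun n => (μ n : ℂ)) 2 := by
    rw [Complex.ofReal_tsum, LSeries]
    exact tsum_congr fun n => (hterm n).symm
  have : ((∑' d : ℕ, (μ d : ℝ) / (d : ℝ) ^ 2 : ℝ) : ℂ) = ((6 / Real.pi ^ 2 : ℝ) : ℂ) := by
    rw [hofr, h1, riemannZeta_two]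
    push_cast
    rw [inv_div]
  exact_mod_cast this

lemma div_tendsto (d : ℕ) (hd : 1 ≤ d) :
    Tendsto (fun n : ℕ => ((n / d : ℕ) : ℝ) / (n : ℝ)) atTop (nhds (1 / d)) := by
  have hlow : Tendsto (fun n : ℕ => 1 / (d : ℝ) - 1 / (n : ℝ)) atTop (nhds (1 / d)) := by
    simpa using tendsto_const_nhds.sub (tendsto_one_div_atTop_nhds_zero_nat (𝕜 := ℝ))
  refine tendsto_of_tendsto_of_tendsto_of_le_of_le' hlow tendsto_const_nhds ?_ ?_
  · filter_upwards [eventually_ge_atTop 1] with n hn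
    have hn0 : (0 : ℝ) < n := by exact_mod_cast hn
    have hd0 : (0 : ℝ) < d := by exact_mod_cast hd
    have key : (n : ℝ) - d ≤ d * ((n / d : ℕ) : ℝ) := by
      have h : n ≤ d * (n / d) + d := by
        have h1 := Nat.div_add_mod n d
        have h2 := Nat.mod_lt n (show 0 < d by omega)
        omega
      have h' : (n : ℝ) ≤ d * ((n / d : ℕ) : ℝ) + d := by exact_mod_cast h
      linarith
    rw [div_sub_div _ _ (ne_of_gt hd0) (ne_of_gt hn0), div_le_div_iff₀ (by positivity) hn0]
    calc (1 * n - d * 1) * n = ((n : ℝ) - d) * n := by ring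
      _ ≤ (d * ((n / d : ℕ) : ℝ)) * n := by
          exact mul_le_mul_of_nonneg_right key hn0.le
      _ = ((n / d : ℕ) : ℝ) * (d * n) := by ring
  · filter_upwards [eventually_ge_atTop 1] with n hn
    have hn0 : (0 : ℝ) < n := by exact_mod_cast hn
    have hd0 : (0 : ℝ) < d := by exact_mod_cast hd
    rw [div_le_div_iff₀ hn0 hd0]
    have h2 : (d : ℝ) * ((n / d : ℕ) : ℝ) ≤ n := by
      exact_mod_cast Nat.mul_div_le n d
    linarith

noncomputable def coprimeF (n d : ℕ) : ℝ :=
  if d ∈ Finset.Icc 1 n then (μ d : ℝ) * (((n / d : ℕ) : ℝ) / (n : ℝ)) ^ 2 else 0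

theorem coprime_probability :
    Tendsto (fun n : ℕ =>
      (((Finset.Icc 1 n ×ˢ Finset.Icc 1 n).filter
          (fun p : ℕ × ℕ => Nat.gcd p.1 p.2 = 1)).card : ℝ) / (n : ℝ) ^ 2)
      atTop (nhds (6 / Real.pi ^ 2)) := by
  have hbound : Summable (fun d : ℕ => 1 / (d : ℝ) ^ 2) :=
    (Real.summable_one_div_nat_pow).mpr one_lt_two
  have hpt : ∀ d : ℕ, Tendsto (fun n => coprimeF n d) atTop (nhds ((μ d : ℝ) / (d : ℝ) ^ 2)) := by
    intro d
    rcases Nat.eq_zero_or_pos d with rfl | hd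
    · simpa [coprimeF] using tendsto_const_nhds
    · have h1 : Tendsto (fun n : ℕ => (μ d : ℝ) * (((n / d : ℕ) : ℝ) / (n : ℝ)) ^ 2)
          atTop (nhds ((μ d : ℝ) * (1 / (d : ℝ)) ^ 2)) :=
        (((div_tendsto d hd).pow 2).const_mul _)
      have h2 : (μ d : ℝ) * (1 / (d : ℝ)) ^ 2 = (μ d : ℝ) / (d : ℝ) ^ 2 := by
        field_simp
      rw [h2] at h1
      refine h1.congr' ?_
      filter_upwards [eventually_ge_atTop d] with n hn
      rw [coprimeF, if_pos (Finset.mem_Icc.mpr ⟨hd, hn⟩)]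
  have hb : ∀ᶠ n in atTop, ∀ d : ℕ, ‖coprimeF n d‖ ≤ 1 / (d : ℝ) ^ 2 := by
    filter_upwards with n
    intro d
    rw [coprimeF]
    split_ifs with h
    · obtain ⟨hd1, hdn⟩ := Finset.mem_Icc.mp h
      have hd0 : (0 : ℝ) < d := by exact_mod_cast hd1
      have hn0 : (0 : ℝ) < n := by
        have : 1 ≤ n := le_trans hd1 hdn
        exact_mod_cast this
      have hx0 : (0 : ℝ) ≤ ((n / d : ℕ) : ℝ) / (n : ℝ) := by positivity
      have hx1 : ((n / d : ℕ) : ℝ) / (n : ℝ) ≤ 1 / d := by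
        rw [div_le_div_iff₀ hn0 hd0]
        have h2 : (d : ℝ) * ((n / d : ℕ) : ℝ) ≤ n := by exact_mod_cast Nat.mul_div_le n d
        linarith
      have hmu : ‖(μ d : ℝ)‖ ≤ 1 := by
        rw [Real.norm_eq_abs, ← Int.cast_abs]
        exact_mod_cast ArithmeticFunction.abs_moebius_le_one (n := d)
      calc ‖(μ d : ℝ) * (((n / d : ℕ) : ℝ) / (n : ℝ)) ^ 2‖
          = ‖(μ d : ℝ)‖ * (((n / d : ℕ) : ℝ) / (n : ℝ)) ^ 2 := by
            rw [norm_mul, Real.norm_eq_abs ((((n / d : ℕ) : ℝ) / (n : ℝ)) ^ 2),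
              _root_.abs_of_nonneg (by positivity)]
        _ ≤ 1 * (1 / (d : ℝ)) ^ 2 := by
            refine mul_le_mul hmu (by nlinarith) (by positivity) zero_le_one
        _ = 1 / (d : ℝ) ^ 2 := by field_simp
    · simp only [norm_zero]
      positivity
  have hmain : Tendsto (fun n : ℕ => ∑' d : ℕ, coprimeF n d) atTop
      (nhds (∑' d : ℕ, (μ d : ℝ) / (d : ℝ) ^ 2)) :=
    tendsto_tsum_of_dominated_convergence hbound hpt hb
  rw [tsum_moebius_div_sq] at hmain
  refine hmain.congr' ?_
  filter_upwards [eventually_ge_atTop 1] with n hn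
  have hn0 : ((n : ℝ)) ≠ 0 := by positivity
  rw [show ∑' d : ℕ, coprimeF n d
      = ∑ d ∈ Finset.Icc 1 n, (μ d : ℝ) * (((n / d : ℕ) : ℝ) / (n : ℝ)) ^ 2 from ?_]
  · rw [card_coprime_eq, Finset.sum_div]
    refine Finset.sum_congr rfl fun d _ => ?_
    field_simp
  · refine tsum_eq_sum ?_ |>.trans (Finset.sum_congr rfl fun d hd => by rw [coprimeF, if_pos hd])
    intro d hd
    rw [coprimeF, if_neg hd]
end

section
/- The asymptotic density of squarefree positive integers is 6/π², i.e., (1/n)·#{k ≤ n : k is squarefree} → 6/π² as n → ∞. -/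
open Filter

namespace SFDensityAux

open Finset ArithmeticFunction Real
open scoped ArithmeticFunction.Moebius ArithmeticFunction.zeta

theorem sum_div_moebius (b : ℕ) : ∑ d ∈ b.divisors, μ d = if b = 1 then 1 else 0 := by
  have := congrArg (fun f : ArithmeticFunction ℤ => f b) moebius_mul_coe_zeta
  simp only [mul_apply, one_apply, natCoe_apply, zeta_apply, Nat.cast_ite, Nat.cast_zero,
    Nat.cast_one] at this
  rw [← this, ← Nat.sum_div_divisors b (fun d => (μ d : ℤ)),
    Nat.sum_divisorsAntidiagonal' (f := fun x y => (μ x : ℤ) * (if y = 0 then (0:ℤ) else 1))]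
  refine Finset.sum_congr rfl fun d hd => ?_
  have hd0 : d ≠ 0 := (Nat.pos_of_mem_divisors hd).ne'
  simp [hd0]


theorem sf_indicator (k : ℕ) (hk : 0 < k) :
    ∑ d ∈ (Icc 1 k).filter (fun d => d ^ 2 ∣ k), μ d = if Squarefree k then 1 else 0 := by
  obtain ⟨a, b, ha0, hb0, hab, ha⟩ := Nat.sq_mul_squarefree_of_pos hk
  have hk0 : k ≠ 0 := hk.ne'
  have hbk : b ^ 2 ∣ k := ⟨a, hab.symm⟩
  have hset : (Icc 1 k).filter (fun d => d ^ 2 ∣ k) = b.divisors := by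
    ext d
    simp only [mem_filter, mem_Icc, Nat.mem_divisors]
    constructor
    · rintro ⟨⟨h1, -⟩, hd⟩
      refine ⟨?_, hb0.ne'⟩
      have hd0 : d ≠ 0 := by omega
      rw [← Nat.factorization_le_iff_dvd hd0 hb0.ne']
      have h2 : (d ^ 2).factorization ≤ k.factorization :=
        (Nat.factorization_le_iff_dvd (pow_ne_zero _ hd0) hk0).2 hd
      rw [← hab, Nat.factorization_mul (pow_ne_zero _ hb0.ne') ha0.ne',
        Nat.factorization_pow] at h2
      rw [Finsupp.le_def] at h2 ⊢
      intro p
      have := h2 p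
      have h1p : a.factorization p ≤ 1 := ha.natFactorization_le_one p
      simp only [Nat.factorization_pow, Finsupp.coe_add, Finsupp.coe_smul, Pi.add_apply,
        Pi.smul_apply, smul_eq_mul] at this ⊢
      omega
    · rintro ⟨hd, -⟩
      have hd2 : d ^ 2 ∣ k := dvd_trans (pow_dvd_pow_of_dvd hd 2) hbk
      have hd0 : d ≠ 0 := fun h => hb0.ne' (by simpa [h] using hd)
      exact ⟨⟨by omega, Nat.le_of_dvd hk (hd.trans (dvd_trans (dvd_pow_self b two_ne_zero) hbk))⟩, hd2⟩
  rw [hset, sum_div_moebius]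
  congr 1
  rw [eq_iff_iff]
  constructor
  · intro hb1
    subst hb1
    rw [← hab]; simpa using ha
  · intro hsq
    have : b * b ∣ k := by rw [← sq]; exact hbk
    exact Nat.isUnit_iff.1 (hsq b this)

theorem hasSum_moebius_div_sq :
    HasSum (fun d : ℕ => (μ d : ℝ) / (d : ℝ) ^ 2) (6 / π ^ 2) := by
  have h2 : (1 : ℝ) < (2 : ℂ).re := by norm_num
  have hsum : LSeriesSummable (fun n => ((μ n : ℤ) : ℂ)) 2 :=
    LSeriesSummable_moebius_iff.mpr h2
  have hmul := LSeries_zeta_mul_Lseries_moebius h2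
  have hzeta : LSeries (fun n => ((ζ n : ℕ) : ℂ)) 2 = riemannZeta 2 :=
    LSeries_zeta_eq_riemannZeta h2
  have hζ2 : riemannZeta 2 = (π : ℂ) ^ 2 / 6 := riemannZeta_two
  have hπ2 : ((π : ℂ)) ^ 2 ≠ 0 := pow_ne_zero 2 (Complex.ofReal_ne_zero.2 Real.pi_ne_zero)
  have hπ : (π : ℂ) ^ 2 / 6 ≠ 0 := by
    simp [div_eq_zero_iff, hπ2]
  have hLμ : LSeries (fun n => ((μ n : ℤ) : ℂ)) 2 = 6 / (π : ℂ) ^ 2 := by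
    have := hmul
    rw [hzeta, hζ2] at this
    field_simp at this
    rw [eq_div_iff hπ2]
    linear_combination this
  have hhs : HasSum (LSeries.term (fun n => ((μ n : ℤ) : ℂ)) 2) (6 / (π : ℂ) ^ 2) :=
    hLμ ▸ hsum.hasSum
  have hterm : ∀ n : ℕ, LSeries.term (fun n => ((μ n : ℤ) : ℂ)) 2 n
      = (((μ n : ℝ) / (n : ℝ) ^ 2 : ℝ) : ℂ) := by
    intro n
    rcases eq_or_ne n 0 with rfl | hn
    · simp [LSeries.term]
    · rw [LSeries.term_of_ne_zero hn]
      have : (n : ℂ) ^ (2 : ℂ) = (n : ℂ) ^ (2 : ℕ) := by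
        rw [show ((2 : ℂ)) = ((2 : ℕ) : ℂ) by norm_num, Complex.cpow_natCast]
      rw [this]
      push_cast
      ring
  rw [funext hterm] at hhs
  have : ((6 / π ^ 2 : ℝ) : ℂ) = 6 / (π : ℂ) ^ 2 := by push_cast; ring
  rw [← this] at hhs
  exact Complex.hasSum_ofReal.mp (by exact_mod_cast hhs)

theorem count_eq (n : ℕ) :
    (((Icc 1 n).filter Squarefree).card : ℤ) =
      ∑ d ∈ Icc 1 (Nat.sqrt n), μ d * (n / d ^ 2 : ℕ) := by
  have step1 : (((Icc 1 n).filter Squarefree).card : ℤ)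
      = ∑ k ∈ Icc 1 n, if Squarefree k then (1 : ℤ) else 0 := by
    rw [Finset.card_filter]; push_cast; rfl
  rw [step1]
  have step2 : ∀ k ∈ Icc 1 n, (if Squarefree k then (1 : ℤ) else 0)
      = ∑ d ∈ (Icc 1 n).filter (fun d => d ^ 2 ∣ k), μ d := by
    intro k hk
    rw [mem_Icc] at hk
    rw [← sf_indicator k (by omega)]
    congr 1
    ext d
    simp only [mem_filter, mem_Icc]
    constructor
    · rintro ⟨⟨h1, h2⟩, hd⟩
      exact ⟨⟨h1, h2.trans hk.2⟩, hd⟩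
    · rintro ⟨⟨h1, -⟩, hd⟩
      have : d ≤ k := Nat.le_of_dvd (by omega) ((dvd_pow_self d two_ne_zero).trans hd)
      exact ⟨⟨h1, this⟩, hd⟩
  rw [Finset.sum_congr rfl step2]
  simp_rw [Finset.sum_filter]
  rw [Finset.sum_comm]
  have step3 : ∀ d ∈ Icc 1 n, (∑ k ∈ Icc 1 n, if d ^ 2 ∣ k then (μ d : ℤ) else 0)
      = μ d * (n / d ^ 2 : ℕ) := by
    intro d _
    rw [← Finset.sum_filter, Finset.sum_const]
    have : Icc 1 n = Ioc 0 n := rfl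
    rw [this, Nat.Ioc_filter_dvd_card_eq_div n (d ^ 2)]
    rw [nsmul_eq_mul, mul_comm]
  rw [Finset.sum_congr rfl step3]
  -- restrict to sqrt n
  symm
  apply Finset.sum_subset
  · apply Finset.Icc_subset_Icc_right
    exact Nat.sqrt_le_self n
  · intro d hd hd'
    rw [mem_Icc] at hd hd'
    have : Nat.sqrt n < d := by omega
    have : n < d ^ 2 := by
      have := Nat.sqrt_lt'.1 this
      nlinarith
    rw [Nat.div_eq_of_lt this]
    simp

theorem term_bound (n d : ℕ) (hd : 1 ≤ d) (hdn : d ^ 2 ≤ n) :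
    |((n / d ^ 2 : ℕ) : ℝ) / n - 1 / (d : ℝ) ^ 2| ≤ 1 / (n:ℝ) := by
  have hn : 0 < n := lt_of_lt_of_le (by positivity) hdn
  set q := n / d ^ 2 with hq
  have hn' : (0:ℝ) < n := by exact_mod_cast hn
  have hd' : (0:ℝ) < (d:ℝ) ^ 2 := by positivity
  have hq1 : (q:ℝ) * (d:ℝ) ^ 2 ≤ n := by exact_mod_cast Nat.div_mul_le_self n (d ^ 2)
  have hq2 : (n:ℝ) < ((q:ℝ) + 1) * (d:ℝ) ^ 2 := by
    have : n < (q + 1) * d ^ 2 := (Nat.div_lt_iff_lt_mul (by positivity)).1 (Nat.lt_succ_self q)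
    exact_mod_cast this
  have heq : (q:ℝ) / n - 1 / (d:ℝ) ^ 2 = ((q:ℝ) * d ^ 2 - n) / (n * d ^ 2) := by
    field_simp
  rw [heq, abs_div, abs_of_pos (mul_pos hn' hd'), div_le_div_iff₀ (mul_pos hn' hd') hn']
  have : |(q:ℝ) * d ^ 2 - n| ≤ (d:ℝ) ^ 2 := by
    rw [abs_le]; constructor <;> nlinarith
  nlinarith [mul_le_mul_of_nonneg_right this hn'.le]


theorem sqrt_tendsto : Tendsto (fun n : ℕ => Nat.sqrt n + 1) atTop atTop := by
  apply tendsto_atTop_atTop.2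
  intro b
  refine ⟨b * b, fun n hn => ?_⟩
  have h1 : Nat.sqrt (b * b) ≤ Nat.sqrt n := Nat.sqrt_le_sqrt hn
  rw [Nat.sqrt_eq] at h1
  omega

end SFDensityAux

open SFDensityAux Finset ArithmeticFunction ArithmeticFunction.Moebius Real in
theorem squarefree_density :
    Tendsto (fun n : ℕ =>
      (((Finset.Icc 1 n).filter Squarefree).card : ℝ) / (n : ℝ))
      atTop (nhds (6 / Real.pi ^ 2)) := by
  set f : ℕ → ℝ := fun d => (μ d : ℝ) / (d : ℝ) ^ 2 with hf
  set F : ℕ → ℝ := fun n => (((Finset.Icc 1 n).filter Squarefree).card : ℝ) / (n : ℝ) with hF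
  set P : ℕ → ℝ := fun n => ∑ d ∈ Icc 1 (Nat.sqrt n), f d with hPdef
  have hIcc : ∀ m : ℕ, ∑ d ∈ Icc 1 m, f d = ∑ d ∈ range (m + 1), f d := by
    intro m
    have h : range (m + 1) = insert 0 (Icc 1 m) := by
      ext x; simp only [mem_range, mem_insert, mem_Icc]; omega
    rw [h, Finset.sum_insert (by simp)]
    simp [hf]
  have hP : Tendsto P atTop (nhds (6 / π ^ 2)) := by
    have h1 : Tendsto (fun m => ∑ d ∈ range m, f d) atTop (nhds (6 / π ^ 2)) :=
      hasSum_moebius_div_sq.tendsto_sum_nat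
    have h2 := h1.comp sqrt_tendsto
    simpa only [Function.comp_def, ← hIcc] using h2
  have herr : ∀ n : ℕ, 1 ≤ n → |F n - P n| ≤ (Nat.sqrt n : ℝ) / n := by
    intro n hn
    have hn' : (0:ℝ) < n := by exact_mod_cast hn
    have hcast : (((Icc 1 n).filter Squarefree).card : ℝ)
        = ∑ d ∈ Icc 1 (Nat.sqrt n), (μ d : ℝ) * ((n / d ^ 2 : ℕ) : ℝ) := by
      have h := count_eq n
      have := congrArg (fun z : ℤ => (z : ℝ)) h
      push_cast at this
      exact this
    have hFP : F n - P n
        = ∑ d ∈ Icc 1 (Nat.sqrt n), (μ d : ℝ) * (((n / d ^ 2 : ℕ) : ℝ) / n - 1 / (d:ℝ) ^ 2) := by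
      rw [hF]
      simp only
      rw [hcast, Finset.sum_div, hPdef]
      simp only
      rw [← Finset.sum_sub_distrib]
      refine Finset.sum_congr rfl fun d hd => ?_
      simp only [hf]
      ring
    rw [hFP]
    refine le_trans (Finset.abs_sum_le_sum_abs _ _) ?_
    have hterm : ∀ d ∈ Icc 1 (Nat.sqrt n),
        |(μ d : ℝ) * (((n / d ^ 2 : ℕ) : ℝ) / n - 1 / (d:ℝ) ^ 2)| ≤ 1 / (n:ℝ) := by
      intro d hd
      rw [mem_Icc] at hd
      have hdn : d ^ 2 ≤ n := by
        have := Nat.le_sqrt.1 hd.2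
        nlinarith
      rw [abs_mul]
      have hμ : |(μ d : ℝ)| ≤ 1 := by
        have := abs_moebius_le_one (n := d)
        exact_mod_cast this
      calc |(μ d : ℝ)| * |((n / d ^ 2 : ℕ) : ℝ) / n - 1 / (d:ℝ) ^ 2|
          ≤ 1 * (1 / (n:ℝ)) :=
            mul_le_mul hμ (term_bound n d hd.1 hdn) (abs_nonneg _) zero_le_one
        _ = 1 / (n:ℝ) := one_mul _
    refine le_trans (Finset.sum_le_sum hterm) ?_
    rw [Finset.sum_const, nsmul_eq_mul, Nat.card_Icc]
    simp only [Nat.add_sub_cancel]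
    rw [mul_one_div]
  have hsqN : Tendsto Nat.sqrt atTop atTop := by
    apply tendsto_atTop_atTop.2
    intro b
    refine ⟨b * b, fun n hn => ?_⟩
    have h1 : Nat.sqrt (b * b) ≤ Nat.sqrt n := Nat.sqrt_le_sqrt hn
    rwa [Nat.sqrt_eq] at h1
  have hz : Tendsto (fun n : ℕ => (Nat.sqrt n : ℝ) / n) atTop (nhds 0) := by
    have hb : Tendsto (fun n : ℕ => 1 / (Nat.sqrt n : ℝ)) atTop (nhds 0) :=
      tendsto_one_div_atTop_nhds_zero_nat.comp hsqN
    apply squeeze_zero' (Eventually.of_forall fun n => by positivity) _ hb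
    filter_upwards [eventually_ge_atTop 1] with n hn
    have hs1 : 1 ≤ Nat.sqrt n := Nat.le_sqrt.2 (by omega)
    have hs1' : (1:ℝ) ≤ (Nat.sqrt n : ℝ) := by exact_mod_cast hs1
    have hn' : (0:ℝ) < n := by exact_mod_cast hn
    have h : ((Nat.sqrt n : ℝ)) * (Nat.sqrt n : ℝ) ≤ n := by
      exact_mod_cast Nat.sqrt_le n
    rw [div_le_div_iff₀ hn' (by linarith)]
    nlinarith
  have hdiff : Tendsto (fun n => F n - P n) atTop (nhds 0) := by
    apply squeeze_zero_norm' _ hz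
    filter_upwards [eventually_ge_atTop 1] with n hn
    simpa using herr n hn
  have := hdiff.add hP
  simpa using this
end

section
/- For every integer m ≥ 2, the asymptotic density of m-free positive integers is 1/ζ(m), i.e., (1/n)·#{k ≤ n : no prime p satisfies p^m ∣ k} → 1/ζ(m) as n → ∞. -/
open Filter

open Finset ArithmeticFunction in
open scoped LSeries.notation in
open scoped Classical in
private lemma mfree_aux_prod_pow_dvd {m k : ℕ} :
    ∀ s : Finset ℕ, (∀ p ∈ s, p.Prime) → (∀ p ∈ s, p ^ m ∣ k) →
      (∏ p ∈ s, p) ^ m ∣ k := by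
  intro s
  induction s using Finset.induction_on with
  | empty => intro _ _; simpa using one_dvd k
  | @insert a s ha ih =>
    intro hp h
    rw [Finset.prod_insert ha, mul_pow]
    have hcop : Nat.Coprime (a ^ m) ((∏ p ∈ s, p) ^ m) := by
      refine Nat.Coprime.pow _ _ (Nat.Coprime.prod_right fun p hps => ?_)
      exact (Nat.coprime_primes (hp a (mem_insert_self a s))
        (hp p (mem_insert_of_mem hps))).mpr (fun hap => ha (hap ▸ hps))
    exact hcop.mul_dvd_of_dvd_of_dvd (h a (mem_insert_self a s))
      (ih (fun p hps => hp p (mem_insert_of_mem hps))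
        (fun p hps => h p (mem_insert_of_mem hps)))

open Finset ArithmeticFunction ArithmeticFunction.Moebius ArithmeticFunction.zeta in
open scoped Classical in
private lemma mfree_aux_per_k (m : ℕ) (hm : 2 ≤ m) {n k : ℕ} (hk : k ∈ Finset.Icc 1 n) :
    (if ¬∃ p : ℕ, p.Prime ∧ p ^ m ∣ k then (1 : ℤ) else 0) =
      ∑ d ∈ (Finset.Icc 1 n).filter (fun d => d ^ m ∣ k), μ d := by
  obtain ⟨hk1, hkn⟩ := Finset.mem_Icc.mp hk
  have hk0 : k ≠ 0 := by omega
  set S := k.primeFactors.filter (fun p => p ^ m ∣ k) with hS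
  set r := ∏ p ∈ S, p with hr
  have hSp : ∀ p ∈ S, p.Prime := fun p hp =>
    Nat.prime_of_mem_primeFactors (Finset.mem_filter.mp hp).1
  have hSd : ∀ p ∈ S, p ^ m ∣ k := fun p hp => (Finset.mem_filter.mp hp).2
  have hrm : r ^ m ∣ k := mfree_aux_prod_pow_dvd S hSp hSd
  have hrk : r ∣ k := dvd_trans (dvd_pow_self r (by omega : m ≠ 0)) hrm
  have hr0 : r ≠ 0 := by
    rw [hr]
    exact Finset.prod_ne_zero_iff.mpr (fun p hp => (hSp p hp).pos.ne')
  -- sum of μ over divisors of r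
  have hdiv : ∑ d ∈ r.divisors, μ d = if r = 1 then (1 : ℤ) else 0 := by
    have h2 : ((μ * ζ : ArithmeticFunction ℤ)) r = (1 : ArithmeticFunction ℤ) r := by
      rw [moebius_mul_coe_zeta]
    rwa [coe_mul_zeta_apply, one_apply] at h2
  -- reduce RHS to sum over divisors of r
  have hsub : r.divisors ⊆ (Finset.Icc 1 n).filter (fun d => d ^ m ∣ k) := by
    intro d hd
    obtain ⟨hdr, -⟩ := Nat.mem_divisors.mp hd
    have hdk : d ^ m ∣ k := dvd_trans (pow_dvd_pow_of_dvd hdr m) hrm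
    have hd0 : d ≠ 0 := by
      rintro rfl
      exact hr0 (Nat.eq_zero_of_zero_dvd hdr)
    have hdn : d ≤ n := le_trans (Nat.le_of_dvd (by omega) (dvd_trans hdr hrk)) hkn
    exact Finset.mem_filter.mpr ⟨Finset.mem_Icc.mpr ⟨by omega, hdn⟩, hdk⟩
  have hRHS : ∑ d ∈ (Finset.Icc 1 n).filter (fun d => d ^ m ∣ k), (μ d : ℤ)
      = ∑ d ∈ r.divisors, μ d := by
    refine (Finset.sum_subset hsub fun d hd hnd => ?_).symm
    by_contra hne
    have hsf : Squarefree d := moebius_ne_zero_iff_squarefree.mp hne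
    obtain ⟨hd1, hdk⟩ := Finset.mem_filter.mp hd
    -- d divides r
    have hdr : d ∣ r := by
      have hsubset : d.primeFactors ⊆ S := by
        intro p hp
        have hpp : p.Prime := Nat.prime_of_mem_primeFactors hp
        have hpd : p ∣ d := Nat.dvd_of_mem_primeFactors hp
        have hpmk : p ^ m ∣ k := dvd_trans (pow_dvd_pow_of_dvd hpd m) hdk
        have hpk : p ∣ k := dvd_trans (dvd_pow_self p (by omega : m ≠ 0)) hpmk
        exact Finset.mem_filter.mpr ⟨Nat.mem_primeFactors.mpr ⟨hpp, hpk, hk0⟩, hpmk⟩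
      calc d = ∏ p ∈ d.primeFactors, p := (Nat.prod_primeFactors_of_squarefree hsf).symm
        _ ∣ r := Finset.prod_dvd_prod_of_subset _ _ _ hsubset
    exact hnd (Nat.mem_divisors.mpr ⟨hdr, hr0⟩)
  rw [hRHS, hdiv]
  -- r = 1 ↔ no prime p with p^m ∣ k
  congr 1
  simp only [eq_iff_iff]
  constructor
  · intro h
    have hSe : S = ∅ := by
      refine Finset.filter_eq_empty_iff.mpr fun p hp => fun hpm => ?_
      exact h ⟨p, Nat.prime_of_mem_primeFactors hp, hpm⟩
    show (∏ p ∈ S, p) = 1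
    rw [hSe, Finset.prod_empty]
  · rintro h ⟨p, hp, hpm⟩
    have hpk : p ∣ k := dvd_trans (dvd_pow_self p (by omega : m ≠ 0)) hpm
    have hpS : p ∈ S := Finset.mem_filter.mpr
      ⟨Nat.mem_primeFactors.mpr ⟨hp, hpk, hk0⟩, hpm⟩
    have hpr : p ∣ r := Finset.dvd_prod_of_mem _ hpS
    rw [h] at hpr
    exact hp.one_lt.ne' (Nat.dvd_one.mp hpr)

open Finset ArithmeticFunction ArithmeticFunction.Moebius ArithmeticFunction.zeta in
open scoped Classical in
private lemma mfree_aux_count (m : ℕ) (hm : 2 ≤ m) (n : ℕ) :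
    ((((Finset.Icc 1 n).filter (fun k => ¬∃ p : ℕ, p.Prime ∧ p ^ m ∣ k)).card : ℤ)) =
      ∑ d ∈ Finset.Icc 1 n, μ d * ((n / d ^ m : ℕ) : ℤ) := by
  have h1 : ((((Finset.Icc 1 n).filter
      (fun k => ¬∃ p : ℕ, p.Prime ∧ p ^ m ∣ k)).card : ℤ)) =
      ∑ k ∈ Finset.Icc 1 n, if ¬∃ p : ℕ, p.Prime ∧ p ^ m ∣ k then (1 : ℤ) else 0 := by
    rw [Finset.card_filter]
    push_cast
    rfl
  rw [h1, Finset.sum_congr rfl (fun k hk => mfree_aux_per_k m hm hk)]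
  have h2 : ∀ k ∈ Finset.Icc 1 n,
      ∑ d ∈ (Finset.Icc 1 n).filter (fun d => d ^ m ∣ k), (μ d : ℤ)
        = ∑ d ∈ Finset.Icc 1 n, if d ^ m ∣ k then (μ d : ℤ) else 0 := by
    intro k _
    rw [Finset.sum_filter]
  rw [Finset.sum_congr rfl h2, Finset.sum_comm]
  refine Finset.sum_congr rfl fun d _ => ?_
  rw [← Finset.sum_filter, Finset.sum_const]
  have hIcc : Finset.Icc 1 n = Finset.Ioc 0 n := by
    ext x
    simp only [Finset.mem_Icc, Finset.mem_Ioc]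
    omega
  rw [hIcc, Nat.Ioc_filter_dvd_card_eq_div n (d ^ m)]
  rw [nsmul_eq_mul, mul_comm]

open scoped Classical in
theorem mfree_density (m : ℕ) (hm : 2 ≤ m) :
    Tendsto (fun n : ℕ =>
      (((Finset.Icc 1 n).filter (fun k => ¬∃ p : ℕ, p.Prime ∧ p ^ m ∣ k)).card : ℝ) / (n : ℝ))
      atTop (nhds (1 / ∑' j : ℕ+, (1 : ℝ) / (j : ℝ) ^ m)) := by
  classical
  open ArithmeticFunction ArithmeticFunction.Moebius ArithmeticFunction.zeta in
  open scoped LSeries.notation in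
  -- the limit candidate
  set g : ℕ → ℝ := fun d => (μ d : ℝ) * (1 / (d : ℝ) ^ m) with hg
  set F : ℕ → ℕ → ℝ := fun n d => (μ d : ℝ) * (((n / d ^ m : ℕ) : ℝ) / (n : ℝ)) with hF
  have hmu_le : ∀ d : ℕ, |(μ d : ℝ)| ≤ 1 := by
    intro d
    rcases ArithmeticFunction.moebius_eq_or d with h | h | h <;> rw [h] <;> norm_num
  have hbound_sum : Summable (fun d : ℕ => 1 / (d : ℝ) ^ m) :=
    Real.summable_one_div_nat_pow.mpr (by omega)
  -- bound : ∀ n d, |F n d| ≤ 1 / d ^ m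
  have hFb : ∀ n d : ℕ, ‖F n d‖ ≤ 1 / (d : ℝ) ^ m := by
    intro n d
    rw [hF, Real.norm_eq_abs, abs_mul]
    rcases Nat.eq_zero_or_pos d with rfl | hd
    · simp [(by omega : m ≠ 0)]
    have hq : (0 : ℝ) < (d : ℝ) ^ m := by positivity
    have h1 : |(((n / d ^ m : ℕ) : ℝ) / (n : ℝ))| ≤ 1 / (d : ℝ) ^ m := by
      rcases Nat.eq_zero_or_pos n with rfl | hn
      · simp [le_of_lt (one_div_pos.mpr hq)]
      have hn' : (0 : ℝ) < (n : ℝ) := by exact_mod_cast hn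
      rw [abs_of_nonneg (by positivity)]
      rw [div_le_div_iff₀ hn' hq, one_mul]
      have : (n / d ^ m : ℕ) * d ^ m ≤ n := Nat.div_mul_le_self n (d ^ m)
      exact_mod_cast this
    calc |(μ d : ℝ)| * |(((n / d ^ m : ℕ) : ℝ) / (n : ℝ))|
        ≤ 1 * (1 / (d : ℝ) ^ m) :=
          mul_le_mul (hmu_le d) h1 (abs_nonneg _) zero_le_one
      _ = 1 / (d : ℝ) ^ m := one_mul _
  -- pointwise limits
  have hFlim : ∀ d : ℕ, Tendsto (fun n => F n d) atTop (nhds (g d)) := by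
    intro d
    rcases Nat.eq_zero_or_pos d with rfl | hd
    · have : (fun n => F n 0) = fun _ => (0 : ℝ) := by
        funext n; simp [hF]
      rw [this, hg]
      simpa using tendsto_const_nhds
    have hq : (0 : ℝ) < (d : ℝ) ^ m := by positivity
    have key : Tendsto (fun n : ℕ => ((n / d ^ m : ℕ) : ℝ) / (n : ℝ)) atTop
        (nhds (1 / (d : ℝ) ^ m)) := by
      have hlo : Tendsto (fun n : ℕ => 1 / (d : ℝ) ^ m - 1 / (n : ℝ)) atTop
          (nhds (1 / (d : ℝ) ^ m)) := by
        have := tendsto_one_div_atTop_nhds_zero_nat (𝕜 := ℝ)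
        simpa using tendsto_const_nhds.sub this
      refine tendsto_of_tendsto_of_tendsto_of_le_of_le' hlo tendsto_const_nhds ?_ ?_
      · filter_upwards [eventually_ge_atTop 1] with n hn
        have hn' : (0 : ℝ) < (n : ℝ) := by exact_mod_cast hn
        have hqn : 0 < d ^ m := pow_pos hd m
        have hnat : n < (n / d ^ m + 1) * d ^ m := by
          have h1 := Nat.div_add_mod n (d ^ m)
          have h2 : n % d ^ m < d ^ m := Nat.mod_lt _ hqn
          calc n = d ^ m * (n / d ^ m) + n % d ^ m := h1.symm
            _ < d ^ m * (n / d ^ m) + d ^ m := by omega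
            _ = (n / d ^ m + 1) * d ^ m := by ring
        have hlt : (n : ℝ) < (((n / d ^ m : ℕ) : ℝ) + 1) * (d : ℝ) ^ m := by
          exact_mod_cast hnat
        rw [sub_le_iff_le_add, ← add_div, div_le_div_iff₀ hq hn', one_mul]
        linarith
      · filter_upwards [eventually_ge_atTop 1] with n hn
        have hn' : (0 : ℝ) < (n : ℝ) := by exact_mod_cast hn
        rw [div_le_div_iff₀ hn' hq, one_mul]
        exact_mod_cast Nat.div_mul_le_self n (d ^ m)
    have := key.const_mul ((μ d : ℝ))
    simpa [hF, hg, mul_comm, mul_div_assoc] using this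
  -- Tannery
  have htan : Tendsto (fun n => ∑' d : ℕ, F n d) atTop (nhds (∑' d : ℕ, g d)) := by
    refine tendsto_tsum_of_dominated_convergence hbound_sum hFlim ?_
    exact Eventually.of_forall fun n => fun d => hFb n d
  -- identify ∑' F n with the counting quotient
  have hFsum : ∀ n : ℕ, 1 ≤ n →
      (((Finset.Icc 1 n).filter (fun k => ¬∃ p : ℕ, p.Prime ∧ p ^ m ∣ k)).card : ℝ) / (n : ℝ)
        = ∑' d : ℕ, F n d := by
    intro n hn
    have hts : ∑' d : ℕ, F n d = ∑ d ∈ Finset.Icc 1 n, F n d := by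
      refine tsum_eq_sum fun d hd => ?_
      rw [Finset.mem_Icc, not_and_or] at hd
      rcases hd with hd | hd
      · have : d = 0 := by omega
        subst this
        simp [hF]
      · have hdn : n < d := by omega
        have : n < d ^ m := lt_of_lt_of_le hdn (Nat.le_self_pow (by omega) d)
        simp [hF, Nat.div_eq_of_lt this]
    rw [hts]
    have hcount := mfree_aux_count m hm n
    have hcastR : (((Finset.Icc 1 n).filter
        (fun k => ¬∃ p : ℕ, p.Prime ∧ p ^ m ∣ k)).card : ℝ)
        = ∑ d ∈ Finset.Icc 1 n, (μ d : ℝ) * ((n / d ^ m : ℕ) : ℝ) := by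
      calc (((Finset.Icc 1 n).filter
          (fun k => ¬∃ p : ℕ, p.Prime ∧ p ^ m ∣ k)).card : ℝ)
          = ((((Finset.Icc 1 n).filter
            (fun k => ¬∃ p : ℕ, p.Prime ∧ p ^ m ∣ k)).card : ℤ) : ℝ) := by simp only [Int.cast_sum, Int.cast_mul, Int.cast_natCast]
        _ = ((∑ d ∈ Finset.Icc 1 n, μ d * ((n / d ^ m : ℕ) : ℤ) : ℤ) : ℝ) := by rw [hcount]
        _ = ∑ d ∈ Finset.Icc 1 n, (μ d : ℝ) * ((n / d ^ m : ℕ) : ℝ) := by simp only [Int.cast_sum, Int.cast_mul, Int.cast_natCast]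
    rw [hcastR, Finset.sum_div]
    refine Finset.sum_congr rfl fun d _ => ?_
    rw [hF, mul_div_assoc]
  -- the counting quotient tends to ∑' g
  have hmain : Tendsto (fun n : ℕ =>
      (((Finset.Icc 1 n).filter (fun k => ¬∃ p : ℕ, p.Prime ∧ p ^ m ∣ k)).card : ℝ) / (n : ℝ))
      atTop (nhds (∑' d : ℕ, g d)) := by
    refine htan.congr' ?_
    filter_upwards [eventually_ge_atTop 1] with n hn
    exact (hFsum n hn).symm
  -- identify the limit with 1 / ζ(m)
  set Z : ℝ := ∑' j : ℕ+, (1 : ℝ) / (j : ℝ) ^ m with hZ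
  have hZg : Z * (∑' d : ℕ, g d) = 1 := by
    have hre : 1 < ((m : ℕ) : ℂ).re := by
      simp only [Complex.natCast_re]
      exact_mod_cast (by omega : 1 < m)
    have hLmul := ArithmeticFunction.LSeries_zeta_mul_Lseries_moebius (s := ((m : ℕ) : ℂ)) hre
    -- identify L ζ m with Z
    have hZc : (Z : ℂ) = L ↗ζ ((m : ℕ) : ℂ) := by
      rw [hZ, Complex.ofReal_tsum]
      unfold LSeries
      have hsupp : Function.support (fun n : ℕ => LSeries.term ↗ζ ((m : ℕ) : ℂ) n) ⊆
          Set.range (fun j : ℕ+ => (j : ℕ)) := by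
        intro x hx
        rcases Nat.eq_zero_or_pos x with rfl | hx0
        · exact absurd (LSeries.term_zero _ _) (Function.mem_support.mp hx)
        · exact ⟨⟨x, hx0⟩, rfl⟩
      rw [← PNat.coe_injective.tsum_eq hsupp]
      refine tsum_congr fun j => ?_
      have hj : ((j : ℕ) : ℕ) ≠ 0 := j.pos.ne'
      rw [LSeries.term_of_ne_zero hj, Complex.cpow_natCast,
        ArithmeticFunction.zeta_apply_ne hj]
      push_cast
      ring
    have hAc : ((∑' d : ℕ, g d : ℝ) : ℂ) = L ↗μ ((m : ℕ) : ℂ) := by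
      rw [Complex.ofReal_tsum]
      unfold LSeries
      refine tsum_congr fun d => ?_
      rcases Nat.eq_zero_or_pos d with rfl | hd
      · simp [hg]
      rw [LSeries.term_of_ne_zero (by omega : d ≠ 0), Complex.cpow_natCast]
      show (((μ d : ℝ) * (1 / (d : ℝ) ^ m) : ℝ) : ℂ) = _
      push_cast
      ring
    have hcast : ((Z * ∑' d : ℕ, g d : ℝ) : ℂ) = ((1 : ℝ) : ℂ) := by
      rw [Complex.ofReal_mul, hZc, hAc, hLmul, Complex.ofReal_one]
    exact_mod_cast hcast
  have hZ0 : Z ≠ 0 := by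
    intro h
    rw [h, zero_mul] at hZg
    exact zero_ne_one hZg
  have hfinal : (∑' d : ℕ, g d) = 1 / Z := by
    rw [eq_div_iff hZ0, mul_comm]
    exact hZg
  rw [← hfinal]
  exact hmain
end

section
/- For every integer r ≥ 2, the probability that r uniformly random integers from {1,...,n} have gcd 1 tends to 1/ζ(r) as n → ∞, i.e., (1/n^r)·#{(k₁,...,k_r) ∈ {1,...,n}^r : gcd(k₁,...,k_r) = 1} → 1/ζ(r). -/
open Filter Finset ArithmeticFunction
open scoped LSeries.notation
open scoped ArithmeticFunction.Moebius ArithmeticFunction.zeta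

private lemma sum_moebius_divisors (m : ℕ) :
    (∑ d ∈ m.divisors, (μ d : ℤ)) = if m = 1 then 1 else 0 := by
  have h : ((μ * ζ : ArithmeticFunction ℤ)) m = (1 : ArithmeticFunction ℤ) m := by
    rw [moebius_mul_coe_zeta]
  rwa [coe_mul_zeta_apply, one_apply] at h

private lemma card_coprime (r n : ℕ) (hr : 1 ≤ r) :
    ((((Fintype.piFinset (fun _ : Fin r => Finset.Icc 1 n)).filter
        (fun f : Fin r → ℕ => Finset.univ.gcd f = 1)).card : ℤ))
    = ∑ d ∈ Finset.Icc 1 n, (μ d : ℤ) * ((n / d : ℕ) : ℤ) ^ r := by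
  classical
  set P := Fintype.piFinset (fun _ : Fin r => Finset.Icc 1 n) with hP
  have key : ∀ f ∈ P, (if Finset.univ.gcd f = 1 then (1 : ℤ) else 0)
      = ∑ d ∈ Finset.Icc 1 n, if d ∣ Finset.univ.gcd f then (μ d : ℤ) else 0 := by
    intro f hf
    set g := Finset.univ.gcd f with hg
    have hi : ∀ i, f i ∈ Finset.Icc 1 n := by
      simpa [hP, Fintype.mem_piFinset] using hf
    set i0 : Fin r := ⟨0, by omega⟩ with hi0
    have hf0 := hi i0
    rw [Finset.mem_Icc] at hf0
    have hgdvd : g ∣ f i0 := Finset.gcd_dvd (Finset.mem_univ _)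
    have hgne : g ≠ 0 := by
      intro h
      rw [h] at hgdvd
      have := Nat.eq_zero_of_zero_dvd hgdvd
      omega
    have hgle : g ≤ n := le_trans (Nat.le_of_dvd (by omega) hgdvd) hf0.2
    have hdiv : Finset.filter (· ∣ g) (Finset.Icc 1 n) = g.divisors := by
      ext d
      simp only [Finset.mem_filter, Finset.mem_Icc, Nat.mem_divisors]
      constructor
      · rintro ⟨⟨h1, h2⟩, h3⟩
        exact ⟨h3, hgne⟩
      · rintro ⟨h1, h2⟩
        have hd0 : d ≠ 0 := by
          rintro rfl
          exact hgne (Nat.eq_zero_of_zero_dvd h1)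
        exact ⟨⟨by omega, le_trans (Nat.le_of_dvd (Nat.pos_of_ne_zero hgne) h1) hgle⟩, h1⟩
    rw [← Finset.sum_filter, hdiv, sum_moebius_divisors]
  have hcount : ∀ d ∈ Finset.Icc 1 n,
      (P.filter (fun f => d ∣ Finset.univ.gcd f)).card = (n / d) ^ r := by
    intro d hd
    rw [Finset.mem_Icc] at hd
    have hPd : P.filter (fun f => d ∣ Finset.univ.gcd f)
        = Fintype.piFinset (fun _ : Fin r => (Finset.Icc 1 n).filter (d ∣ ·)) := by
      ext f
      simp only [hP, Finset.mem_filter, Fintype.mem_piFinset, Finset.dvd_gcd_iff,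
        Finset.mem_univ, forall_const]
      exact forall_and.symm
    rw [hPd, Fintype.card_piFinset]
    have hIcc : Finset.Icc 1 n = Finset.Ioc 0 n := Finset.Icc_add_one_left_eq_Ioc 0 n
    rw [hIcc, Nat.Ioc_filter_dvd_card_eq_div]
    simp [Finset.prod_const]
  calc ((P.filter (fun f : Fin r → ℕ => Finset.univ.gcd f = 1)).card : ℤ)
      = ∑ f ∈ P, (if Finset.univ.gcd f = 1 then (1 : ℤ) else 0) := by
        rw [Finset.card_filter]; push_cast; rfl
    _ = ∑ f ∈ P, ∑ d ∈ Finset.Icc 1 n, (if d ∣ Finset.univ.gcd f then (μ d : ℤ) else 0) :=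
        Finset.sum_congr rfl key
    _ = ∑ d ∈ Finset.Icc 1 n, ∑ f ∈ P, (if d ∣ Finset.univ.gcd f then (μ d : ℤ) else 0) :=
        Finset.sum_comm
    _ = ∑ d ∈ Finset.Icc 1 n, (μ d : ℤ) * ((n / d : ℕ) : ℤ) ^ r := by
        refine Finset.sum_congr rfl fun d hd => ?_
        rw [← Finset.sum_filter, Finset.sum_const, hcount d hd, nsmul_eq_mul,
          Nat.cast_pow, mul_comm]

private lemma tendsto_div_div (d : ℕ) (hd : 0 < d) :
    Tendsto (fun n : ℕ => ((n / d : ℕ) : ℝ) / (n : ℝ)) atTop (nhds (1 / (d : ℝ))) := by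
  have hd0 : (0 : ℝ) < d := by exact_mod_cast hd
  have hlow : Tendsto (fun n : ℕ => 1 / (d : ℝ) - 1 / (n : ℝ)) atTop (nhds (1 / (d : ℝ))) := by
    simpa using (tendsto_const_nhds (x := 1 / (d : ℝ))).sub tendsto_one_div_atTop_nhds_zero_nat
  refine tendsto_of_tendsto_of_tendsto_of_le_of_le' hlow tendsto_const_nhds ?_ ?_
  · filter_upwards [eventually_ge_atTop 1] with n hn
    have hn0 : (0 : ℝ) < n := by exact_mod_cast hn
    have h2 : (n : ℝ) < d * ((n / d : ℕ) : ℝ) + d := by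
      have : n < d * (n / d) + d := by
        have h := Nat.div_add_mod n d
        have h' := Nat.mod_lt n hd
        omega
      exact_mod_cast this
    rw [sub_le_iff_le_add, ← add_div, div_le_div_iff₀ hd0 hn0]
    nlinarith
  · filter_upwards [eventually_ge_atTop 1] with n hn
    have hn0 : (0 : ℝ) < n := by exact_mod_cast hn
    rw [div_le_div_iff₀ hn0 hd0]
    have : ((n / d : ℕ) : ℝ) * d ≤ n := by exact_mod_cast Nat.div_mul_le_self n d
    linarith

theorem coprime_tuples_probability (r : ℕ) (hr : 2 ≤ r) :
    Tendsto (fun n : ℕ =>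
      (((Fintype.piFinset (fun _ : Fin r => Finset.Icc 1 n)).filter
          (fun f : Fin r → ℕ => Finset.univ.gcd f = 1)).card : ℝ) / (n : ℝ) ^ r)
      atTop (nhds (1 / ∑' j : ℕ+, (1 : ℝ) / (j : ℝ) ^ r)) := by
  classical
  set F : ℕ → ℕ → ℝ := fun n d =>
    if d ∈ Finset.Icc 1 n then (μ d : ℝ) * (((n / d : ℕ) : ℝ) / (n : ℝ)) ^ r else 0 with hF
  have hsummable : Summable (fun d : ℕ => 1 / (d : ℝ) ^ r) :=
    Real.summable_one_div_nat_pow.mpr (by omega)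
  -- pointwise limits
  have hlim : ∀ d : ℕ, Tendsto (fun n => F n d) atTop (nhds ((μ d : ℝ) / (d : ℝ) ^ r)) := by
    intro d
    rcases Nat.eq_zero_or_pos d with rfl | hd
    · simpa [hF, ArithmeticFunction.map_zero] using tendsto_const_nhds (α := ℕ) (x := (0 : ℝ))
    · have hq := tendsto_div_div d hd
      have h1 : Tendsto (fun n : ℕ => (μ d : ℝ) * (((n / d : ℕ) : ℝ) / (n : ℝ)) ^ r)
          atTop (nhds ((μ d : ℝ) * (1 / (d : ℝ)) ^ r)) := (hq.pow r).const_mul _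
      have h2 : (μ d : ℝ) * (1 / (d : ℝ)) ^ r = (μ d : ℝ) / (d : ℝ) ^ r := by
        rw [div_pow, one_pow, div_eq_mul_inv, div_eq_mul_inv, one_mul]
      rw [← h2]
      refine h1.congr' ?_
      filter_upwards [eventually_ge_atTop d] with n hn
      simp only [hF]
      rw [if_pos (Finset.mem_Icc.mpr ⟨hd, hn⟩)]
  -- uniform bound
  have hbound : ∀ n d, ‖F n d‖ ≤ 1 / (d : ℝ) ^ r := by
    intro n d
    by_cases hdn : d ∈ Finset.Icc 1 n
    · rw [Finset.mem_Icc] at hdn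
      obtain ⟨hd1, hdn'⟩ := hdn
      have hd0 : (0 : ℝ) < d := by exact_mod_cast hd1
      have hn0 : (0 : ℝ) < n := by exact_mod_cast lt_of_lt_of_le hd1 hdn'
      have hx0 : (0 : ℝ) ≤ ((n / d : ℕ) : ℝ) / (n : ℝ) := by positivity
      have hx1 : ((n / d : ℕ) : ℝ) / (n : ℝ) ≤ 1 / (d : ℝ) := by
        rw [div_le_div_iff₀ hn0 hd0]
        have : ((n / d : ℕ) : ℝ) * d ≤ n := by exact_mod_cast Nat.div_mul_le_self n d
        linarith
      have hmu : |(μ d : ℝ)| ≤ 1 := by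
        have := ArithmeticFunction.abs_moebius_le_one (n := d)
        exact_mod_cast this
      have : ‖F n d‖ = |(μ d : ℝ)| * (((n / d : ℕ) : ℝ) / (n : ℝ)) ^ r := by
        simp only [hF]
        rw [if_pos (Finset.mem_Icc.mpr ⟨hd1, hdn'⟩), Real.norm_eq_abs, abs_mul, abs_pow,
          abs_of_nonneg hx0]
      rw [this]
      calc |(μ d : ℝ)| * (((n / d : ℕ) : ℝ) / (n : ℝ)) ^ r
          ≤ 1 * (1 / (d : ℝ)) ^ r := by
            exact mul_le_mul hmu (pow_le_pow_left₀ hx0 hx1 r) (by positivity) zero_le_one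
        _ = 1 / (d : ℝ) ^ r := by rw [one_mul, div_pow, one_pow]
    · simp only [hF]
      rw [if_neg hdn, norm_zero]
      positivity
  have main := tendsto_tsum_of_dominated_convergence hsummable hlim
    (Eventually.of_forall hbound)
  -- identify the partial expression with the tsum
  have heq : ∀ᶠ n in atTop,
      (∑' d, F n d) =
      (((Fintype.piFinset (fun _ : Fin r => Finset.Icc 1 n)).filter
          (fun f : Fin r → ℕ => Finset.univ.gcd f = 1)).card : ℝ) / (n : ℝ) ^ r := by
    filter_upwards [eventually_ge_atTop 1] with n hn
    have hn0 : (0 : ℝ) < n := by exact_mod_cast hn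
    have hts : (∑' d, F n d) = ∑ d ∈ Finset.Icc 1 n, F n d := by
      refine tsum_eq_sum ?_
      intro d hd
      simp only [hF]
      rw [if_neg hd]
    have hc := card_coprime r n (by omega)
    have hcR : (((Fintype.piFinset (fun _ : Fin r => Finset.Icc 1 n)).filter
          (fun f : Fin r → ℕ => Finset.univ.gcd f = 1)).card : ℝ)
        = ∑ d ∈ Finset.Icc 1 n, (μ d : ℝ) * ((n / d : ℕ) : ℝ) ^ r := by
      have h2 := congrArg (fun z : ℤ => (z : ℝ)) hc
      push_cast at h2
      exact h2
    rw [hts, hcR, Finset.sum_div]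
    refine Finset.sum_congr rfl fun d hd => ?_
    simp only [hF]
    rw [if_pos hd, div_pow, mul_div_assoc]
  have main' := main.congr' heq
  -- now identify the limit value
  have hvalue : (∑' d : ℕ, (μ d : ℝ) / (d : ℝ) ^ r) = 1 / ∑' j : ℕ+, (1 : ℝ) / (j : ℝ) ^ r := by
    have hr0 : r ≠ 0 := by omega
    have hs : 1 < (r : ℂ).re := by
      rw [Complex.natCast_re]
      exact_mod_cast (by omega : 1 < r)
    have hzeq : (∑' j : ℕ+, (1 : ℝ) / (j : ℝ) ^ r) = ∑' n : ℕ, (1 : ℝ) / (n : ℝ) ^ r := by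
      rw [Summable.tsum_eq_zero_add hsummable, Nat.cast_zero, zero_pow hr0, div_zero, zero_add,
        ← Equiv.tsum_eq Equiv.pnatEquivNat.symm (fun j : ℕ+ => (1 : ℝ) / (j : ℝ) ^ r)]
      refine tsum_congr fun n => ?_
      simp [Equiv.pnatEquivNat]
    have hMu : LSeries ↗μ (r : ℂ) = ((∑' d : ℕ, (μ d : ℝ) / (d : ℝ) ^ r : ℝ) : ℂ) := by
      rw [Complex.ofReal_tsum, LSeries]
      refine tsum_congr fun n => ?_
      rcases eq_or_ne n 0 with rfl | hn
      · simp [ArithmeticFunction.map_zero]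
      · rw [LSeries.term_of_ne_zero hn, Complex.cpow_natCast]
        push_cast
        ring
    have hZe : LSeries ↗ζ (r : ℂ) = ((∑' n : ℕ, (1 : ℝ) / (n : ℝ) ^ r : ℝ) : ℂ) := by
      rw [Complex.ofReal_tsum, LSeries]
      refine tsum_congr fun n => ?_
      rcases eq_or_ne n 0 with rfl | hn
      · simp [zero_pow hr0]
      · rw [LSeries.term_of_ne_zero hn, Complex.cpow_natCast,
          ArithmeticFunction.zeta_apply_ne hn]
        push_cast
        ring
    have hprod := ArithmeticFunction.LSeries_zeta_mul_Lseries_moebius (s := (r : ℂ)) hs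
    rw [hMu, hZe, ← Complex.ofReal_mul, ← Complex.ofReal_one] at hprod
    have hre := Complex.ofReal_injective hprod
    rw [hzeq]
    exact eq_one_div_of_mul_eq_one_left (by rw [mul_comm]; exact hre)
  rw [hvalue] at main'
  exact main'
end

section
/- The probability that two uniformly random odd integers from {1,...,2n-1} are coprime tends to 8/π² as n → ∞, i.e., (1/n²)·#{(i,j) : i,j odd, 1 ≤ i,j ≤ 2n-1, gcd(i,j) = 1} → 8/π². -/
open Filter Finset ArithmeticFunction Topology
open scoped ArithmeticFunction.Moebius

def Acnt (n d : ℕ) : ℕ :=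
  ((Finset.Icc 1 (2 * n - 1)).filter (fun i => Odd i ∧ d ∣ i)).card

lemma Acnt_of_not_odd {d : ℕ} (hd : ¬ Odd d) (n : ℕ) : Acnt n d = 0 := by
  rw [Acnt, Finset.card_eq_zero, Finset.filter_eq_empty_iff]
  rintro i hi ⟨hodd, k, rfl⟩
  exact hd (Nat.odd_mul.mp hodd).1

lemma Acnt_eq (n : ℕ) {d : ℕ} (hd : Odd d) :
    Acnt n d = (2 * n - 1 + d) / (2 * d) := by
  have hd1 : 1 ≤ d := hd.pos
  have h2d : 0 < 2 * d := by omega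
  have hset : (Finset.Icc 1 (2 * n - 1)).filter (fun i => Odd i ∧ d ∣ i)
      = (Finset.range ((2 * n - 1 + d) / (2 * d))).image (fun j => d * (2 * j + 1)) := by
    ext i
    simp only [Finset.mem_filter, Finset.mem_Icc, Finset.mem_image, Finset.mem_range]
    constructor
    · rintro ⟨⟨h1, h2⟩, hodd, k, rfl⟩
      have hk : Odd k := (Nat.odd_mul.mp hodd).2
      obtain ⟨j, rfl⟩ := hk
      refine ⟨j, ?_, rfl⟩
      have h3 : (j + 1) * (2 * d) ≤ 2 * n - 1 + d := by
        have : d * (2 * j + 1) + d = (j + 1) * (2 * d) := by ring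
        omega
      have := (Nat.le_div_iff_mul_le h2d).mpr h3
      omega
    · rintro ⟨j, hj, rfl⟩
      have h3 : (j + 1) * (2 * d) ≤ 2 * n - 1 + d := (Nat.le_div_iff_mul_le h2d).mp (by omega)
      have h4 : d * (2 * j + 1) + d = (j + 1) * (2 * d) := by ring
      have h5 : 1 ≤ d * (2 * j + 1) := Nat.one_le_iff_ne_zero.mpr (by positivity)
      exact ⟨⟨h5, by omega⟩, Nat.odd_mul.mpr ⟨hd, ⟨j, by ring⟩⟩, ⟨2 * j + 1, rfl⟩⟩
  rw [Acnt, hset, Finset.card_image_of_injective _ ?_, Finset.card_range]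
  intro a b hab
  simp only at hab
  have := Nat.eq_of_mul_eq_mul_left (by omega : 0 < d) hab
  omega

lemma count_eq (n : ℕ) :
    ((((Finset.Icc 1 (2 * n - 1)) ×ˢ (Finset.Icc 1 (2 * n - 1))).filter
        (fun p : ℕ × ℕ => Odd p.1 ∧ Odd p.2 ∧ Nat.gcd p.1 p.2 = 1)).card : ℤ)
      = ∑ e ∈ Finset.Icc 1 (2 * n - 1), μ e * (Acnt n e : ℤ) ^ 2 := by
  classical
  set s := Finset.Icc 1 (2 * n - 1) with hs
  have key : ∀ p : ℕ × ℕ, p ∈ s ×ˢ s →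
      (if Odd p.1 ∧ Odd p.2 ∧ Nat.gcd p.1 p.2 = 1 then (1 : ℤ) else 0)
      = ∑ e ∈ s, μ e * ((if Odd p.1 ∧ e ∣ p.1 then (1:ℤ) else 0) *
          (if Odd p.2 ∧ e ∣ p.2 then (1:ℤ) else 0)) := by
    rintro ⟨a, b⟩ hp
    dsimp only
    simp only [Finset.mem_product, hs, Finset.mem_Icc] at hp
    obtain ⟨⟨ha1, ha2⟩, hb1, hb2⟩ := hp
    by_cases hab : Odd a ∧ Odd b
    · obtain ⟨hoa, hob⟩ := hab
      have htermeq : ∀ e ∈ s, μ e * ((if Odd a ∧ e ∣ a then (1:ℤ) else 0) *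
          (if Odd b ∧ e ∣ b then (1:ℤ) else 0))
          = if e ∣ Nat.gcd a b then μ e else 0 := by
        intro e he
        by_cases hd : e ∣ Nat.gcd a b
        · rw [if_pos hd, if_pos ⟨hoa, hd.trans (Nat.gcd_dvd_left a b)⟩,
            if_pos ⟨hob, hd.trans (Nat.gcd_dvd_right a b)⟩]; ring
        · rw [if_neg hd]
          rcases (not_and_or.mp (fun hc : e ∣ a ∧ e ∣ b => hd (Nat.dvd_gcd hc.1 hc.2))) with h | h
          · rw [if_neg (fun hc : Odd a ∧ e ∣ a => h hc.2)]; ring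
          · rw [if_neg (fun hc : Odd b ∧ e ∣ b => h hc.2)]; ring
      rw [Finset.sum_congr rfl htermeq, ← Finset.sum_filter]
      have hg1 : 1 ≤ Nat.gcd a b := Nat.one_le_iff_ne_zero.mpr (Nat.gcd_ne_zero_left (by omega))
      have hfilter : s.filter (fun e => e ∣ Nat.gcd a b) = (Nat.gcd a b).divisors := by
        ext e
        simp only [hs, Finset.mem_filter, Finset.mem_Icc, Nat.mem_divisors]
        constructor
        · rintro ⟨⟨h1, h2⟩, h3⟩; exact ⟨h3, by omega⟩
        · rintro ⟨h3, h4⟩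
          have he1 : 1 ≤ e := Nat.one_le_iff_ne_zero.mpr (by rintro rfl; simp at h3; omega)
          have he2 : e ≤ Nat.gcd a b := Nat.le_of_dvd (by omega) h3
          have hgb : Nat.gcd a b ≤ a := Nat.le_of_dvd (by omega) (Nat.gcd_dvd_left a b)
          exact ⟨⟨he1, by omega⟩, h3⟩
      rw [hfilter, ← coe_mul_zeta_apply, moebius_mul_coe_zeta, one_apply]
      simp [hoa, hob]
    · rw [if_neg (fun hc : Odd a ∧ Odd b ∧ Nat.gcd a b = 1 => hab ⟨hc.1, hc.2.1⟩)]
      refine (Finset.sum_eq_zero fun e he => ?_).symm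
      rcases not_and_or.mp hab with h | h
      · rw [if_neg (fun hc : Odd a ∧ e ∣ a => h hc.1)]; ring
      · rw [if_neg (fun hc : Odd b ∧ e ∣ b => h hc.1)]; ring
  rw [Finset.card_filter, Nat.cast_sum]
  push_cast
  rw [Finset.sum_congr rfl key, Finset.sum_comm]
  refine Finset.sum_congr rfl fun e he => ?_
  rw [← Finset.mul_sum]
  congr 1
  rw [Finset.sum_product]
  dsimp only
  rw [← Finset.sum_mul_sum s s (fun x => if Odd x ∧ e ∣ x then (1:ℤ) else 0)
    (fun y => if Odd y ∧ e ∣ y then (1:ℤ) else 0), Finset.sum_boole, sq, Acnt]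

lemma hasSum_moebius_div_sq :
    HasSum (fun n : ℕ => ((μ n : ℤ) : ℝ) / (n : ℝ) ^ 2) (6 / Real.pi ^ 2) := by
  have hs : (1 : ℝ) < (2 : ℂ).re := by norm_num
  have hπ : (Real.pi : ℂ) ≠ 0 := Complex.ofReal_ne_zero.mpr Real.pi_ne_zero
  have hsum : LSeriesSummable (fun n => ((μ n : ℤ) : ℂ)) 2 :=
    ArithmeticFunction.LSeriesSummable_moebius_iff.mpr hs
  have hmul := ArithmeticFunction.LSeries_zeta_mul_Lseries_moebius (s := 2) hs
  rw [ArithmeticFunction.LSeries_zeta_eq_riemannZeta hs, riemannZeta_two] at hmul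
  have hLμ : LSeries (fun n => ((μ n : ℤ) : ℂ)) 2 = ((6 / Real.pi ^ 2 : ℝ) : ℂ) := by
    push_cast
    rw [eq_div_iff (pow_ne_zero 2 hπ)]
    field_simp at hmul
    linear_combination hmul
  have hterm : HasSum (LSeries.term (fun n => ((μ n : ℤ) : ℂ)) 2)
      ((6 / Real.pi ^ 2 : ℝ) : ℂ) := hLμ ▸ hsum.hasSum
  have hre := Complex.hasSum_re hterm
  rw [Complex.ofReal_re] at hre
  refine hre.congr_fun fun n => ?_
  rcases eq_or_ne n 0 with rfl | hn
  · simp [LSeries.term]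
  · rw [LSeries.term_of_ne_zero hn]
    rw [show ((n : ℂ) ^ (2 : ℂ)) = ((n : ℂ) ^ (2 : ℕ)) from Complex.cpow_ofNat _ 2]
    rw [show ((μ n : ℤ) : ℂ) / (n : ℂ) ^ (2 : ℕ) = (((μ n : ℤ) : ℝ) / (n : ℝ) ^ 2 : ℝ) by
      push_cast; ring]
    exact Complex.ofReal_re _

lemma hasSum_odd_moebius :
    HasSum (fun d : ℕ => if Odd d then ((μ d : ℤ) : ℝ) / (d : ℝ) ^ 2 else 0)
      (8 / Real.pi ^ 2) := by
  set g : ℕ → ℝ := fun d => if Odd d then ((μ d : ℤ) : ℝ) / (d : ℝ) ^ 2 else 0 with hg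
  have habs : ∀ d : ℕ, |((μ d : ℤ) : ℝ)| ≤ 1 := by
    intro d
    have := ArithmeticFunction.abs_moebius_le_one (n := d)
    exact_mod_cast (by exact_mod_cast this : |((μ d : ℤ) : ℝ)| ≤ (1 : ℝ))
  have hsummable : Summable g := by
    apply Summable.of_norm_bounded hasSum_zeta_two.summable
    intro d
    rcases eq_or_ne d 0 with rfl | hd
    · simp [hg]
    · rw [hg]
      by_cases h : Odd d
      · simp only [if_pos h, Real.norm_eq_abs, abs_div, abs_pow, abs_of_nonneg
          (Nat.cast_nonneg (α := ℝ) d)]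
        have hd2 : (0 : ℝ) < (d : ℝ) ^ 2 := by positivity
        rw [div_le_div_iff₀ hd2 hd2, one_mul]
        exact mul_le_of_le_one_left (le_of_lt hd2) (habs d)
      · simp only [if_neg h, norm_zero]
        positivity
  obtain ⟨T, hT⟩ := hsummable
  have hE : HasSum (fun d : ℕ => if Odd d then 0 else ((μ d : ℤ) : ℝ) / (d : ℝ) ^ 2)
      (-(1 / 4) * T) := by
    have hinj : Function.Injective (fun m : ℕ => 2 * m) := fun a b h => by dsimp at h; omega
    rw [← Function.Injective.hasSum_iff hinj ?_]
    · refine (hT.mul_left (-(1 / 4))).congr_fun fun m => ?_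
      show (if Odd (2 * m) then (0:ℝ) else ((μ (2 * m) : ℤ) : ℝ) / ((2 * m : ℕ) : ℝ) ^ 2)
          = -(1/4) * g m
      rw [if_neg (by simp [Nat.odd_iff])]
      rcases Nat.even_or_odd m with he | ho
      · have hμ : μ (2 * m) = 0 := by
          rcases eq_or_ne m 0 with rfl | hm
          · simp
          · apply ArithmeticFunction.moebius_eq_zero_of_not_squarefree
            intro hsq
            obtain ⟨k, rfl⟩ := he
            have : ¬ IsUnit (2 : ℕ) := by decide
            exact this (hsq 2 ⟨k, by ring⟩)
        have hgm : g m = 0 := by rw [hg]; simp [Nat.not_odd_iff_even.mpr he]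
        simp [hμ, hgm]
      · have hcop : Nat.Coprime 2 m := Nat.coprime_two_left.mpr ho
        have hμ : μ (2 * m) = -(μ m) := by
          rw [ArithmeticFunction.isMultiplicative_moebius.map_mul_of_coprime hcop,
            ArithmeticFunction.moebius_apply_prime Nat.prime_two]
          ring
        have hm1 : (1 : ℝ) ≤ (m : ℝ) := by exact_mod_cast ho.pos
        rw [hg]
        simp only [if_pos ho, hμ]
        push_cast
        have hm0 : (m : ℝ) ≠ 0 := by linarith
        have h4 : ((2 * (m:ℝ))) ^ 2 = 4 * (m:ℝ) ^ 2 := by ring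
        rw [h4, neg_div, neg_mul, neg_inj, mul_comm (1/4 : ℝ), mul_one_div, div_div]
        ring_nf
    · rintro x hx
      have hodd : Odd x := by
        rcases Nat.even_or_odd x with ⟨k, hk⟩ | h
        · exact absurd ⟨k, show 2 * k = x by omega⟩ hx
        · exact h
      simp [hodd]
  have hsum68 : T + -(1 / 4) * T = 6 / Real.pi ^ 2 := by
    have hcomb : HasSum (fun d : ℕ => ((μ d : ℤ) : ℝ) / (d : ℝ) ^ 2) (T + -(1 / 4) * T) := by
      refine (hT.add hE).congr_fun fun d => ?_
      by_cases h : Odd d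
      · simp [hg, h]
      · simp [hg, h]
    exact hcomb.unique hasSum_moebius_div_sq
  have hT8 : T = 8 / Real.pi ^ 2 := by
    have hπ : Real.pi ≠ 0 := Real.pi_ne_zero
    field_simp at hsum68 ⊢
    linarith
  exact hT8 ▸ hT

lemma natdiv_bounds (a b : ℕ) (hb : 0 < b) :
    (a : ℝ) - b < ((a / b : ℕ) : ℝ) * b ∧ ((a / b : ℕ) : ℝ) * b ≤ a := by
  constructor
  · have h1 := Nat.div_add_mod a b
    have h2 := Nat.mod_lt a hb
    have : (a : ℝ) = (b : ℝ) * ((a / b : ℕ) : ℝ) + ((a % b : ℕ) : ℝ) := by exact_mod_cast h1.symm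
    have h3 : ((a % b : ℕ) : ℝ) < b := by exact_mod_cast h2
    nlinarith
  · exact_mod_cast Nat.div_mul_le_self a b

lemma Acnt_tendsto {e : ℕ} (he : Odd e) :
    Tendsto (fun n : ℕ => ((Acnt n e : ℕ) : ℝ) / (n : ℝ)) atTop (𝓝 (1 / (e : ℝ))) := by
  have he1 : 1 ≤ e := he.pos
  have he0 : (0 : ℝ) < e := by exact_mod_cast he1
  have hlim : Tendsto (fun n : ℕ => 2 / (n : ℝ)) atTop (𝓝 0) :=
    tendsto_const_nhds.div_atTop tendsto_natCast_atTop_atTop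
  have hlo : Tendsto (fun n : ℕ => 1 / (e : ℝ) - 2 / (n : ℝ)) atTop (𝓝 (1 / (e : ℝ))) := by
    simpa using tendsto_const_nhds.sub hlim
  have hhi : Tendsto (fun n : ℕ => 1 / (e : ℝ) + 2 / (n : ℝ)) atTop (𝓝 (1 / (e : ℝ))) := by
    simpa using tendsto_const_nhds.add hlim
  refine tendsto_of_tendsto_of_tendsto_of_le_of_le' hlo hhi ?_ ?_
  · filter_upwards [eventually_ge_atTop 1] with n hn
    have hn0 : (0 : ℝ) < n := by exact_mod_cast hn
    rw [Acnt_eq n he]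
    obtain ⟨h1, h2⟩ := natdiv_bounds (2 * n - 1 + e) (2 * e) (by omega)
    set q : ℝ := (((2 * n - 1 + e) / (2 * e) : ℕ) : ℝ) with hq
    have hcast : ((2 * n - 1 + e : ℕ) : ℝ) = 2 * (n : ℝ) - 1 + e := by
      have : (2 * n - 1 + e : ℕ) = 2 * n - 1 + e := rfl
      push_cast [Nat.cast_sub (by omega : 1 ≤ 2 * n)]
      ring
    rw [hcast] at h1
    have hcast2 : ((2 * e : ℕ) : ℝ) = 2 * (e : ℝ) := by push_cast; ring
    rw [hcast2] at h1
    rw [div_sub_div _ _ he0.ne' hn0.ne', div_le_div_iff₀ (by positivity) hn0]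
    have he1' : (1 : ℝ) ≤ (e : ℝ) := by exact_mod_cast he1
    have hn1' : (1 : ℝ) ≤ (n : ℝ) := by exact_mod_cast hn
    nlinarith [mul_lt_mul_of_pos_right h1 hn0, mul_nonneg (sub_nonneg.mpr he1') hn0.le]
  · filter_upwards [eventually_ge_atTop 1] with n hn
    have hn0 : (0 : ℝ) < n := by exact_mod_cast hn
    rw [Acnt_eq n he]
    obtain ⟨h1, h2⟩ := natdiv_bounds (2 * n - 1 + e) (2 * e) (by omega)
    set q : ℝ := (((2 * n - 1 + e) / (2 * e) : ℕ) : ℝ) with hq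
    have hcast : ((2 * n - 1 + e : ℕ) : ℝ) = 2 * (n : ℝ) - 1 + e := by
      push_cast [Nat.cast_sub (by omega : 1 ≤ 2 * n)]
      ring
    rw [hcast] at h2
    have hcast2 : ((2 * e : ℕ) : ℝ) = 2 * (e : ℝ) := by push_cast; ring
    rw [hcast2] at h2
    rw [div_add_div _ _ he0.ne' hn0.ne', div_le_div_iff₀ hn0 (by positivity)]
    have he1' : (1 : ℝ) ≤ (e : ℝ) := by exact_mod_cast he1
    have hn1' : (1 : ℝ) ≤ (n : ℝ) := by exact_mod_cast hn
    nlinarith [mul_le_mul_of_nonneg_right h2 hn0.le, mul_nonneg (sub_nonneg.mpr he1') hn0.le]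

theorem coprime_odd_probability :
    Tendsto (fun n : ℕ =>
      (((Finset.Icc 1 (2 * n - 1) ×ˢ Finset.Icc 1 (2 * n - 1)).filter
          (fun p : ℕ × ℕ => Odd p.1 ∧ Odd p.2 ∧ Nat.gcd p.1 p.2 = 1)).card : ℝ) / (n : ℝ) ^ 2)
      atTop (nhds (8 / Real.pi ^ 2)) := by
  classical
  have habs : ∀ d : ℕ, |((μ d : ℤ) : ℝ)| ≤ 1 := by
    intro d
    exact_mod_cast (by exact_mod_cast ArithmeticFunction.abs_moebius_le_one (n := d) :
      |((μ d : ℤ) : ℝ)| ≤ (1 : ℝ))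
  set F : ℕ → ℕ → ℝ :=
    fun n e => ((μ e : ℤ) : ℝ) * (((Acnt n e : ℕ) : ℝ) / (n : ℝ)) ^ 2 with hF
  set g : ℕ → ℝ := fun d => if Odd d then ((μ d : ℤ) : ℝ) / (d : ℝ) ^ 2 else 0 with hg
  -- the uniform bound on Acnt
  have hAcnt_bound : ∀ n : ℕ, 1 ≤ n → ∀ e : ℕ, ((Acnt n e : ℕ) : ℝ) * e ≤ 2 * n := by
    intro n hn e
    by_cases he : Odd e
    · have he1 : 1 ≤ e := he.pos
      rcases le_or_gt e (2 * n - 1) with hle | hlt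
      · rw [Acnt_eq n he]
        obtain ⟨h1, h2⟩ := natdiv_bounds (2 * n - 1 + e) (2 * e) (by omega)
        have hcast : ((2 * n - 1 + e : ℕ) : ℝ) = 2 * (n : ℝ) - 1 + e := by
          push_cast [Nat.cast_sub (by omega : 1 ≤ 2 * n)]
          ring
        have hcast2 : ((2 * e : ℕ) : ℝ) = 2 * (e : ℝ) := by push_cast; ring
        rw [hcast2, hcast] at h2
        have hee : (e : ℝ) ≤ 2 * (n : ℝ) - 1 := by
          have h2n : (1 : ℕ) ≤ 2 * n := by omega
          calc (e : ℝ) ≤ ((2 * n - 1 : ℕ) : ℝ) := by exact_mod_cast hle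
            _ = 2 * (n : ℝ) - 1 := by push_cast [Nat.cast_sub h2n]; ring
        linarith
      · have : Acnt n e = 0 := by
          rw [Acnt_eq n he]
          exact Nat.div_eq_of_lt (by omega)
        simp [this]
    · simp [Acnt_of_not_odd he]
  -- dominated convergence
  have hDCT : Tendsto (fun n : ℕ => ∑' e : ℕ, F n e) atTop (𝓝 (∑' e : ℕ, g e)) := by
    apply tendsto_tsum_of_dominated_convergence
      (bound := fun e : ℕ => 4 / (e : ℝ) ^ 2)
    · refine (hasSum_zeta_two.summable.mul_left 4).congr fun e => ?_
      rw [mul_one_div]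
    · intro e
      by_cases he : Odd e
      · rw [hg]
        simp only [if_pos he]
        have h2 : Tendsto (fun n : ℕ => F n e) atTop
            (𝓝 (((μ e : ℤ) : ℝ) * (1 / (e : ℝ)) ^ 2)) :=
          ((Acnt_tendsto he).pow 2).const_mul _
        convert h2 using 2
        rw [div_pow, one_pow, mul_one_div]
      · rw [hg]
        simp only [if_neg he]
        have : ∀ n : ℕ, F n e = 0 := by
          intro n
          rw [hF]
          simp [Acnt_of_not_odd he]
        simpa [this] using tendsto_const_nhds
    · filter_upwards [eventually_ge_atTop 1] with n hn e
      have hn0 : (0 : ℝ) < n := by exact_mod_cast hn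
      rw [hF, Real.norm_eq_abs, abs_mul]
      rcases eq_or_ne e 0 with rfl | he0
      · have : Acnt n 0 = 0 := Acnt_of_not_odd (by simp) n
        simp [this]
      · have he0' : (0 : ℝ) < e := by
          have : 1 ≤ e := Nat.one_le_iff_ne_zero.mpr he0
          exact_mod_cast this
        have key : (((Acnt n e : ℕ) : ℝ) / (n : ℝ)) ^ 2 ≤ 4 / (e : ℝ) ^ 2 := by
          have hb := hAcnt_bound n hn e
          rw [div_pow, div_le_div_iff₀ (by positivity) (by positivity)]
          have hA0 : (0 : ℝ) ≤ ((Acnt n e : ℕ) : ℝ) := Nat.cast_nonneg _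
          nlinarith [mul_self_le_mul_self (mul_nonneg hA0 he0'.le) hb, hn0.le]
        have habs2 : |(((Acnt n e : ℕ) : ℝ) / (n : ℝ)) ^ 2|
            = (((Acnt n e : ℕ) : ℝ) / (n : ℝ)) ^ 2 :=
          abs_of_nonneg (by positivity)
        rw [habs2]
        calc |((μ e : ℤ) : ℝ)| * ((((Acnt n e : ℕ) : ℝ) / (n : ℝ)) ^ 2)
            ≤ 1 * ((((Acnt n e : ℕ) : ℝ) / (n : ℝ)) ^ 2) :=
              mul_le_mul_of_nonneg_right (habs e) (by positivity)
          _ = (((Acnt n e : ℕ) : ℝ) / (n : ℝ)) ^ 2 := one_mul _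
          _ ≤ 4 / (e : ℝ) ^ 2 := key
  rw [show (8 / Real.pi ^ 2 : ℝ) = ∑' e : ℕ, g e from (hasSum_odd_moebius.tsum_eq).symm]
  refine hDCT.congr' ?_
  filter_upwards [eventually_ge_atTop 1] with n hn
  have hn0 : (0 : ℝ) < n := by exact_mod_cast hn
  have hvanish : ∀ e ∉ Finset.Icc 1 (2 * n - 1), F n e = 0 := by
    intro e he
    rw [Finset.mem_Icc] at he
    by_cases hodd : Odd e
    · have he1 : 1 ≤ e := hodd.pos
      have hlt : 2 * n - 1 < e := by omega
      have : Acnt n e = 0 := by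
        rw [Acnt_eq n hodd]
        exact Nat.div_eq_of_lt (by omega)
      rw [hF]; simp [this]
    · rw [hF]; simp [Acnt_of_not_odd hodd]
  rw [tsum_eq_sum hvanish]
  have hcount := count_eq n
  have hcast : ((((Finset.Icc 1 (2 * n - 1)) ×ˢ (Finset.Icc 1 (2 * n - 1))).filter
        (fun p : ℕ × ℕ => Odd p.1 ∧ Odd p.2 ∧ Nat.gcd p.1 p.2 = 1)).card : ℝ)
      = ∑ e ∈ Finset.Icc 1 (2 * n - 1), ((μ e : ℤ) : ℝ) * ((Acnt n e : ℕ) : ℝ) ^ 2 := by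
    exact_mod_cast congrArg (fun z : ℤ => (z : ℝ)) hcount
  rw [hcast, Finset.sum_div]
  refine Finset.sum_congr rfl fun e he => ?_
  simp only [hF]
  ring
end

section
/- The sum of the totient function satisfies ∑_{k=1}^{n} φ(k) = (3/π²)n² + O(n log n). -/
open Finset ArithmeticFunction Real

lemma totient_eq_sum_moebius (k : ℕ) (hk : 0 < k) :
    (Nat.totient k : ℤ) = ∑ p ∈ k.divisorsAntidiagonal, moebius p.1 * (p.2 : ℤ) := by
  have h := (ArithmeticFunction.sum_eq_iff_sum_mul_moebius_eq
      (f := fun x : ℕ => (Nat.totient x : ℤ)) (g := fun x : ℕ => (x : ℤ))).mp ?_ k hk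
  · exact h.symm
  · intro m hm
    exact_mod_cast congrArg (Nat.cast : ℕ → ℤ) (Nat.sum_totient m)

lemma swap_sum (n : ℕ) (f : ℕ → ℕ → ℤ) :
    ∑ k ∈ Icc 1 n, ∑ p ∈ k.divisorsAntidiagonal, f p.1 p.2
      = ∑ d ∈ Icc 1 n, ∑ e ∈ Icc 1 (n / d), f d e := by
  rw [Finset.sum_sigma', Finset.sum_sigma']
  refine Finset.sum_nbij' (fun p => ⟨p.2.1, p.2.2⟩) (fun p => ⟨p.1 * p.2, (p.1, p.2)⟩)
    ?_ ?_ ?_ ?_ ?_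
  · rintro ⟨k, d, e⟩ h
    simp only [Finset.mem_sigma, Finset.mem_Icc, Nat.mem_divisorsAntidiagonal] at h ⊢
    obtain ⟨⟨hk1, hkn⟩, hde, hk0⟩ := h
    subst hde
    have he : 0 < e := Nat.pos_of_ne_zero (by rintro rfl; simp at hk1)
    have hd0 : 0 < d := Nat.pos_of_ne_zero (by rintro rfl; simp at hk1)
    refine ⟨⟨hd0, le_trans (Nat.le_mul_of_pos_right d he) hkn⟩, he, ?_⟩
    rw [Nat.le_div_iff_mul_le hd0, mul_comm]
    exact hkn
  · rintro ⟨d, e⟩ h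
    simp only [Finset.mem_sigma, Finset.mem_Icc, Nat.mem_divisorsAntidiagonal] at h ⊢
    obtain ⟨⟨hd1, hdn⟩, he1, hend⟩ := h
    have hmul : e * d ≤ n := (Nat.le_div_iff_mul_le hd1).mp hend
    have h1 : 1 ≤ d * e := Nat.one_le_iff_ne_zero.mpr (Nat.mul_ne_zero (by omega) (by omega))
    have hmul' : d * e ≤ n := by rwa [mul_comm] at hmul
    exact ⟨⟨h1, hmul'⟩, trivial, by omega⟩
  · rintro ⟨k, d, e⟩ h
    simp only [Finset.mem_sigma, Finset.mem_Icc, Nat.mem_divisorsAntidiagonal] at h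
    obtain ⟨_, hde, _⟩ := h
    simp [hde]
  · rintro ⟨d, e⟩ _; rfl
  · rintro ⟨k, d, e⟩ _; rfl

lemma gauss_sum (m : ℕ) : ∑ e ∈ Icc 1 m, (e : ℝ) = m * (m + 1) / 2 := by
  induction m with
  | zero => simp
  | succ k ih =>
    rw [Finset.sum_Icc_succ_top (by omega), ih]; push_cast; ring

lemma abs_mu_div_sq_le (m : ℕ) : ‖(moebius m : ℝ) / m ^ 2‖ ≤ ((m : ℝ) ^ 2)⁻¹ := by
  rcases Nat.eq_zero_or_pos m with rfl | hm
  · simp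
  · rw [Real.norm_eq_abs, abs_div, abs_of_nonneg (by positivity : (0:ℝ) ≤ (m:ℝ)^2),
      div_le_iff₀ (by positivity), inv_mul_cancel₀ (by positivity)]
    have := @ArithmeticFunction.abs_moebius_le_one m
    calc |((moebius m : ℤ) : ℝ)| = ((|moebius m| : ℤ) : ℝ) := Int.cast_abs.symm
      _ ≤ 1 := by exact_mod_cast this

lemma summable_inv_sq : Summable (fun n : ℕ => ((n : ℝ) ^ 2)⁻¹) :=
  Real.summable_one_div_nat_pow.mpr one_lt_two |>.congr (by intro n; simp [one_div])

lemma summable_norm_mu : Summable (fun d : ℕ => ‖(moebius d : ℝ) / d ^ 2‖) :=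
  Summable.of_nonneg_of_le (fun n => norm_nonneg _) abs_mu_div_sq_le summable_inv_sq

lemma tail_bound (n : ℕ) (hn : 1 ≤ n) :
    |(∑ d ∈ Icc 1 n, (moebius d : ℝ) / d ^ 2) - ∑' d : ℕ, (moebius d : ℝ) / d ^ 2|
      ≤ ((n : ℝ))⁻¹ := by
  set f := fun d : ℕ => (moebius d : ℝ) / d ^ 2 with hf
  have hpartial : ∑ d ∈ Icc 1 n, f d = ∑ d ∈ range (n + 1), f d := by
    rw [Finset.range_eq_Ico, Finset.sum_eq_sum_Ico_succ_bot (by omega)]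
    rw [Finset.Ico_add_one_right_eq_Icc]
    simp [hf]
  have hsplit := Summable.sum_add_tsum_nat_add (f := f) (n + 1) summable_norm_mu.of_norm
  have hg : Summable (fun i : ℕ => (((i + (n + 1) : ℕ) : ℝ) ^ 2)⁻¹) := by
    exact (summable_nat_add_iff (f := fun m : ℕ => ((m : ℝ) ^ 2)⁻¹) (n + 1)).mpr summable_inv_sq
  have habs : Summable (fun i : ℕ => ‖f (i + (n + 1))‖) :=
    (summable_nat_add_iff (f := fun d : ℕ => ‖(moebius d : ℝ) / d ^ 2‖) (n + 1)).mpr summable_norm_mu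
  have htail : ∑' i : ℕ, (((i + (n + 1) : ℕ) : ℝ) ^ 2)⁻¹ ≤ (n : ℝ)⁻¹ := by
    apply tsum_le_of_sum_range_le (fun i => by positivity)
    intro m
    have hre : ∑ i ∈ range m, (((i + (n + 1) : ℕ) : ℝ) ^ 2)⁻¹
        = ∑ j ∈ Ioc n (n + m), ((j : ℝ) ^ 2)⁻¹ := by
      rw [← Finset.Icc_add_one_left_eq_Ioc, ← Finset.Ico_add_one_right_eq_Icc, Finset.sum_Ico_eq_sum_range]
      have : n + m + 1 - (n + 1) = m := by omega
      rw [this]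
      exact Finset.sum_congr rfl (fun i _ => by rw [Nat.add_comm (n+1) i])
    rw [hre]
    rcases Nat.eq_zero_or_pos m with rfl | hm
    · simp [Finset.Ioc_self]
    · refine le_trans (sum_Ioc_inv_sq_le_sub (by omega) (by omega)) ?_
      have h0 : (0:ℝ) ≤ ((n:ℝ) + (m:ℝ))⁻¹ := by positivity
      push_cast
      linarith
  have heq : ∑ d ∈ range (n + 1), f d - ∑' d, f d = -(∑' i : ℕ, f (i + (n + 1))) := by
    rw [← hsplit]; ring
  rw [hpartial, heq, abs_neg]
  calc |∑' i : ℕ, f (i + (n + 1))| ≤ ∑' i : ℕ, ‖f (i + (n + 1))‖ := by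
        simpa using norm_tsum_le_tsum_norm habs
    _ ≤ ∑' i : ℕ, (((i + (n + 1) : ℕ) : ℝ) ^ 2)⁻¹ :=
        Summable.tsum_le_tsum (fun i => abs_mu_div_sq_le _) habs hg
    _ ≤ (n : ℝ)⁻¹ := htail

lemma summable_mu_div_sq : Summable (fun d : ℕ => (moebius d : ℝ) / d ^ 2) := by
  apply Summable.of_norm
  have hsum : Summable (fun n : ℕ => ((n : ℝ) ^ 2)⁻¹) :=
    Real.summable_one_div_nat_pow.mpr one_lt_two |>.congr (by intro n; simp [one_div])
  refine Summable.of_nonneg_of_le (fun n => norm_nonneg _) ?_ hsum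
  intro n
  rcases Nat.eq_zero_or_pos n with rfl | hn
  · simp
  · rw [Real.norm_eq_abs, abs_div, abs_of_nonneg (by positivity : (0:ℝ) ≤ (n:ℝ)^2),
        div_le_iff₀ (by positivity), inv_mul_cancel₀ (by positivity)]
    have := @ArithmeticFunction.abs_moebius_le_one n
    calc |((moebius n : ℤ) : ℝ)| = ((|moebius n| : ℤ) : ℝ) := by exact Int.cast_abs.symm
      _ ≤ 1 := by exact_mod_cast this

lemma tsum_mu_div_sq : ∑' d : ℕ, (moebius d : ℝ) / d ^ 2 = 6 / Real.pi ^ 2 := by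
  have h2 : (1 : ℝ) < (2 : ℂ).re := by norm_num
  have hz : LSeries (fun n : ℕ => (ArithmeticFunction.zeta n : ℂ)) 2
      * LSeries (fun n : ℕ => (moebius n : ℂ)) 2 = 1 :=
    LSeries_zeta_mul_Lseries_moebius h2
  have hzeta : LSeries (fun n : ℕ => (ArithmeticFunction.zeta n : ℂ)) 2 = riemannZeta 2 :=
    LSeries_zeta_eq_riemannZeta h2
  have hpi : riemannZeta 2 = (Real.pi : ℂ) ^ 2 / 6 := riemannZeta_two
  have hL : LSeries (fun n : ℕ => (moebius n : ℂ)) 2 = 6 / (Real.pi : ℂ) ^ 2 := by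
    have hne : ((Real.pi : ℂ) ^ 2 : ℂ) ≠ 0 := by
      simp [Real.pi_ne_zero]
    rw [hzeta, hpi] at hz
    field_simp at hz ⊢
    linear_combination hz
  have hterm : ∀ n : ℕ, ((( (moebius n : ℝ) / n ^ 2 : ℝ)) : ℂ)
      = LSeries.term (fun n : ℕ => (moebius n : ℂ)) 2 n := by
    intro n
    rcases Nat.eq_zero_or_pos n with rfl | hn
    · simp [LSeries.term]
    · rw [LSeries.term_of_ne_zero (by omega)]
      push_cast
      norm_num [Complex.cpow_natCast]
  apply Complex.ofReal_injective
  rw [Complex.ofReal_tsum, tsum_congr hterm]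
  rw [show (∑' n : ℕ, LSeries.term (fun n : ℕ => (moebius n : ℂ)) 2 n)
      = LSeries (fun n : ℕ => (moebius n : ℂ)) 2 from rfl, hL]
  push_cast
  ring

lemma key_identity (n : ℕ) :
    ((∑ k ∈ Icc 1 n, Nat.totient k : ℕ) : ℝ)
      = ∑ d ∈ Icc 1 n, (moebius d : ℝ) * ((n / d : ℕ) * ((n / d : ℕ) + 1) / 2) := by
  have h1 : ((∑ k ∈ Icc 1 n, Nat.totient k : ℕ) : ℤ)
      = ∑ d ∈ Icc 1 n, (moebius d : ℤ) * ∑ e ∈ Icc 1 (n / d), (e : ℤ) := by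
    push_cast
    rw [Finset.sum_congr rfl (fun k hk =>
      totient_eq_sum_moebius k (by exact (Finset.mem_Icc.mp hk).1)),
      swap_sum n (fun d e => moebius d * (e : ℤ))]
    exact Finset.sum_congr rfl (fun d _ => (Finset.mul_sum _ _ _).symm)
  have h2 : ((∑ k ∈ Icc 1 n, Nat.totient k : ℕ) : ℝ)
      = ∑ d ∈ Icc 1 n, (moebius d : ℝ) * ∑ e ∈ Icc 1 (n / d), (e : ℝ) := by
    have h2 := congrArg (fun z : ℤ => (z : ℝ)) h1
    push_cast at h2 ⊢
    exact h2
  rw [h2]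
  exact Finset.sum_congr rfl (fun d _ => by rw [gauss_sum])

lemma per_d_bound (n d : ℕ) (hd1 : 1 ≤ d) (hdn : d ≤ n) :
    |((n / d : ℕ) * ((n / d : ℕ) + 1) / 2 : ℝ) - (n : ℝ) ^ 2 / (2 * (d : ℝ) ^ 2)|
      ≤ 3 / 2 * ((n : ℝ) / d) := by
  have hd0 : (0 : ℝ) < d := by exact_mod_cast hd1
  set m : ℕ := n / d with hm
  set x : ℝ := (n : ℝ) / d with hx
  have hmx : (m : ℝ) ≤ x := Nat.cast_div_le
  have hxm : x < m + 1 := by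
    rw [hx, div_lt_iff₀ hd0]
    have h1 := Nat.div_add_mod n d
    have h2 := Nat.mod_lt n (show 0 < d by omega)
    have : n < d * (n / d) + d := by omega
    calc (n : ℝ) < (d : ℝ) * m + d := by exact_mod_cast this
      _ = ((m : ℝ) + 1) * d := by ring
  have h1x : 1 ≤ x := by
    rw [hx, le_div_iff₀ hd0, one_mul]
    exact_mod_cast hdn
  have hxsq : (n : ℝ) ^ 2 / (2 * (d : ℝ) ^ 2) = x ^ 2 / 2 := by
    rw [hx]; ring
  rw [hxsq, abs_le]
  have hm0 : (0 : ℝ) ≤ m := Nat.cast_nonneg m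
  have hp : (0:ℝ) ≤ x + m := by linarith
  have key1 : (x - m) * (x + m) ≤ 1 * (x + m) :=
    mul_le_mul_of_nonneg_right (by linarith) hp
  have key2 : (0:ℝ) ≤ (x - m) * (x + m) := mul_nonneg (by linarith) hp
  constructor <;> nlinarith [key1, key2, hmx, h1x, hm0]

theorem totient_sum_error :
    ∃ C : ℝ, ∀ n : ℕ, 2 ≤ n →
      |((∑ k ∈ Finset.Icc 1 n, Nat.totient k : ℕ) : ℝ) - (3 / Real.pi ^ 2) * (n : ℝ) ^ 2|
        ≤ C * n * Real.log n := by
  use 7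
  intro n hn
  have hn1 : 1 ≤ n := by omega
  have hn0 : (0:ℝ) < n := by positivity
  have hn2 : (2:ℝ) ≤ n := by exact_mod_cast hn
  set A := ∑' d : ℕ, (moebius d : ℝ) / d ^ 2 with hA
  set P := ∑ d ∈ Icc 1 n, (moebius d : ℝ) / d ^ 2 with hP
  have hA6 : A = 6 / Real.pi ^ 2 := tsum_mu_div_sq
  have main_eq : ((∑ k ∈ Finset.Icc 1 n, Nat.totient k : ℕ) : ℝ)
        - (3 / Real.pi ^ 2) * (n : ℝ) ^ 2
      = (∑ d ∈ Icc 1 n, ((moebius d : ℝ) * ((n / d : ℕ) * ((n / d : ℕ) + 1) / 2)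
            - (moebius d : ℝ) * ((n : ℝ) ^ 2 / (2 * (d : ℝ) ^ 2))))
        + (n : ℝ) ^ 2 / 2 * (P - A) := by
    rw [key_identity n, Finset.sum_sub_distrib]
    have hsum : ∑ d ∈ Icc 1 n, (moebius d : ℝ) * ((n : ℝ) ^ 2 / (2 * (d : ℝ) ^ 2))
        = (n : ℝ) ^ 2 / 2 * P := by
      rw [hP, Finset.mul_sum]
      refine Finset.sum_congr rfl (fun d hd => ?_)
      have hd1 : 1 ≤ d := (Finset.mem_Icc.mp hd).1
      have hd0 : ((d : ℝ)) ≠ 0 := by positivity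
      field_simp
    rw [hsum, hA6]
    ring
  have hb1 : |∑ d ∈ Icc 1 n, ((moebius d : ℝ) * ((n / d : ℕ) * ((n / d : ℕ) + 1) / 2)
        - (moebius d : ℝ) * ((n : ℝ) ^ 2 / (2 * (d : ℝ) ^ 2)))|
      ≤ 3 / 2 * n * (1 + Real.log n) := by
    calc |∑ d ∈ Icc 1 n, ((moebius d : ℝ) * ((n / d : ℕ) * ((n / d : ℕ) + 1) / 2)
            - (moebius d : ℝ) * ((n : ℝ) ^ 2 / (2 * (d : ℝ) ^ 2)))|
        ≤ ∑ d ∈ Icc 1 n, |(moebius d : ℝ) * ((n / d : ℕ) * ((n / d : ℕ) + 1) / 2)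
            - (moebius d : ℝ) * ((n : ℝ) ^ 2 / (2 * (d : ℝ) ^ 2))| :=
          Finset.abs_sum_le_sum_abs _ _
      _ ≤ ∑ d ∈ Icc 1 n, 3 / 2 * ((n : ℝ) / d) := by
          refine Finset.sum_le_sum (fun d hd => ?_)
          obtain ⟨hd1, hdn⟩ := Finset.mem_Icc.mp hd
          rw [← mul_sub, abs_mul]
          have h1 : |(moebius d : ℝ)| ≤ 1 := by
            calc |((moebius d : ℤ) : ℝ)| = ((|moebius d| : ℤ) : ℝ) := Int.cast_abs.symm
              _ ≤ 1 := by exact_mod_cast (@ArithmeticFunction.abs_moebius_le_one d)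
          have h2 := per_d_bound n d hd1 hdn
          calc |(moebius d : ℝ)| * |((n / d : ℕ) * ((n / d : ℕ) + 1) / 2 : ℝ)
                - (n : ℝ) ^ 2 / (2 * (d : ℝ) ^ 2)|
              ≤ 1 * (3 / 2 * ((n : ℝ) / d)) :=
                mul_le_mul h1 h2 (abs_nonneg _) zero_le_one
            _ = 3 / 2 * ((n : ℝ) / d) := one_mul _
      _ = 3 / 2 * n * ∑ d ∈ Icc 1 n, ((d : ℝ))⁻¹ := by
          rw [Finset.mul_sum]
          exact Finset.sum_congr rfl (fun d _ => by ring)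
      _ ≤ 3 / 2 * n * (1 + Real.log n) := by
          have heq : ((harmonic n : ℚ) : ℝ) = ∑ d ∈ Icc 1 n, ((d : ℝ))⁻¹ := by
            rw [harmonic_eq_sum_Icc]
            push_cast
            rfl
          have hh : ∑ d ∈ Icc 1 n, ((d : ℝ))⁻¹ ≤ 1 + Real.log n := by
            rw [← heq]; exact harmonic_le_one_add_log n
          have : (0:ℝ) ≤ 3 / 2 * n := by positivity
          exact mul_le_mul_of_nonneg_left hh this
  have hb2 : |(n : ℝ) ^ 2 / 2 * (P - A)| ≤ (n : ℝ) / 2 := by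
    rw [abs_mul, abs_of_nonneg (by positivity : (0:ℝ) ≤ (n : ℝ) ^ 2 / 2)]
    have ht := tail_bound n hn1
    calc (n : ℝ) ^ 2 / 2 * |P - A| ≤ (n : ℝ) ^ 2 / 2 * ((n : ℝ))⁻¹ := by
          exact mul_le_mul_of_nonneg_left ht (by positivity)
      _ = (n : ℝ) / 2 := by field_simp
  have hlog : (0.6931471803 : ℝ) ≤ Real.log n := by
    calc (0.6931471803 : ℝ) ≤ Real.log 2 := le_of_lt Real.log_two_gt_d9
      _ ≤ Real.log n := Real.log_le_log (by norm_num) hn2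
  have habs : |((∑ k ∈ Finset.Icc 1 n, Nat.totient k : ℕ) : ℝ)
        - (3 / Real.pi ^ 2) * (n : ℝ) ^ 2|
      ≤ 3 / 2 * n * (1 + Real.log n) + (n : ℝ) / 2 := by
    rw [main_eq]
    exact le_trans (abs_add_le _ _) (add_le_add hb1 hb2)
  refine le_trans habs ?_
  have hnl : (0.6931471803 : ℝ) * n ≤ Real.log n * n :=
    mul_le_mul_of_nonneg_right hlog hn0.le
  nlinarith [hnl, hn0, hlog, hn2]
end
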